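/- arXiv:1509.03871 — 6 statements merged into one kernel-verified Lean document; each statement's English description precedes it below -/
import Mathlib

section
/- For every real number α with 0 < α ≤ 1/2 there exists N such that for all n ≥ N the following holds: if a 2-dimensional simplicial complex on n vertices has at least n^{2+α} faces, then it contains a nontrivial Z/2 2-cycle with at most 4·n^{2−2α} faces. (Equivalently, g₂(n,m) ≤ 4 n^{2−2α} whenever m ≥ n^{2+α}.) -/
/-- A `Z/2` 2-cycle: a finite set `Z` of 3-element subsets of the vertex type `V`
such that every 2-element subset of `V` is contained in an even number of members of `Z`. -/
def IsTwoCycle {V : Type} [DecidableEq V] (Z : Finset (Finset V)) : Prop :=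
  (∀ t ∈ Z, t.card = 3) ∧
  ∀ e : Finset V, e.card = 2 → Even ((Z.filter (fun t => e ⊆ t)).card)

lemma zmod2_ne_zero (x : ZMod 2) (h : x ≠ 0) : x = 1 := by
  fin_cases x
  · exact absurd rfl h
  · rfl

/-- Linear algebra over `ZMod 2`: if a set of 3-element faces inside a vertex set `S`
has more faces than `S` has 2-element subsets, the boundary vectors are dependent,
yielding a nonempty 2-cycle. -/
lemma exists_small_cycle {n : ℕ} (S : Finset (Fin n)) (F' : Finset (Finset (Fin n)))
    (h3 : ∀ t ∈ F', t.card = 3) (hsub : ∀ t ∈ F', t ⊆ S)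
    (hcard : S.card.choose 2 < F'.card) :
    ∃ Z ⊆ F', Z.Nonempty ∧ IsTwoCycle Z := by
  classical
  set E : Finset (Finset (Fin n)) := S.powersetCard 2 with hE
  set v : ↥F' → (↥E → ZMod 2) :=
    fun t e => if (e : Finset (Fin n)) ⊆ (t : Finset (Fin n)) then 1 else 0 with hv
  have hnotli : ¬ LinearIndependent (ZMod 2) v := by
    intro h
    have h1 := h.fintype_card_le_finrank
    rw [Module.finrank_fintype_fun_eq_card] at h1
    simp only [Fintype.card_coe] at h1
    rw [Finset.card_powersetCard] at h1
    omega
  obtain ⟨g, hgsum, i0, hgi0⟩ := Fintype.not_linearIndependent_iff.mp hnotli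
  refine ⟨(Finset.univ.filter fun i : ↥F' => g i ≠ 0).image Subtype.val, ?_, ?_, ?_, ?_⟩
  · intro t ht
    obtain ⟨i, _, rfl⟩ := Finset.mem_image.mp ht
    exact i.2
  · exact ⟨i0, Finset.mem_image.mpr ⟨i0, Finset.mem_filter.mpr ⟨Finset.mem_univ _, hgi0⟩, rfl⟩⟩
  · intro t ht
    obtain ⟨i, _, rfl⟩ := Finset.mem_image.mp ht
    exact h3 _ i.2
  · intro e he
    by_cases heS : e ⊆ S
    · have heE : e ∈ E := Finset.mem_powersetCard.mpr ⟨heS, he⟩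
      have h0 : (∑ i : ↥F', g i • v i) ⟨e, heE⟩ = 0 := by rw [hgsum]; rfl
      rw [Finset.sum_apply] at h0
      have h1 : ∀ i : ↥F', (g i • v i) ⟨e, heE⟩ =
          (if g i ≠ 0 ∧ e ⊆ (i : Finset (Fin n)) then (1 : ZMod 2) else 0) := by
        intro i
        simp only [hv, Pi.smul_apply, smul_eq_mul]
        by_cases hg : g i = 0
        · simp [hg]
        · rw [zmod2_ne_zero _ hg]
          simp [hg]
      rw [Finset.sum_congr rfl (fun i _ => h1 i)] at h0
      rw [Finset.sum_boole] at h0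
      have h2 : ((Finset.univ.filter fun i : ↥F' => g i ≠ 0).image Subtype.val).filter
          (fun t => e ⊆ t) =
          (Finset.univ.filter fun i : ↥F' => g i ≠ 0 ∧ e ⊆ (i : Finset (Fin n))).image
            Subtype.val := by
        rw [Finset.filter_image, Finset.filter_filter]
      rw [h2, Finset.card_image_of_injective _ Subtype.val_injective]
      rw [even_iff_two_dvd]
      exact (ZMod.natCast_eq_zero_iff _ 2).mp h0
    · have h2 : ((Finset.univ.filter fun i : ↥F' => g i ≠ 0).image Subtype.val).filter
          (fun t => e ⊆ t) = ∅ := by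
        rw [Finset.filter_eq_empty_iff]
        intro t ht het
        obtain ⟨i, _, rfl⟩ := Finset.mem_image.mp ht
        exact heS (het.trans (hsub _ i.2))
      rw [h2]
      simp

/-- The number of `s`-element vertex subsets containing a fixed 3-element face. -/
lemma count_supersets {n : ℕ} (s : ℕ) (hs3 : 3 ≤ s) (t : Finset (Fin n)) (ht : t.card = 3) :
    (((Finset.univ : Finset (Fin n)).powersetCard s).filter (fun S => t ⊆ S)).card
      = (n - 3).choose (s - 3) := by
  classical
  have key : (((Finset.univ : Finset (Fin n)).powersetCard s).filter (fun S => t ⊆ S)).card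
      = ((Finset.univ \ t).powersetCard (s - 3)).card := by
    apply Finset.card_nbij' (fun S => S \ t) (fun A => A ∪ t)
    · intro S hS
      rw [Finset.mem_coe, Finset.mem_filter, Finset.mem_powersetCard] at hS
      obtain ⟨⟨_, hcard⟩, htS⟩ := hS
      rw [Finset.mem_coe, Finset.mem_powersetCard]
      exact ⟨Finset.sdiff_subset_sdiff (Finset.subset_univ _) le_rfl,
        by beta_reduce; rw [Finset.card_sdiff_of_subset htS, hcard, ht]⟩
    · intro A hA
      rw [Finset.mem_coe, Finset.mem_powersetCard] at hA
      obtain ⟨hAsub, hAcard⟩ := hA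
      have hdisj : Disjoint A t := (Finset.subset_sdiff.mp hAsub).2
      rw [Finset.mem_coe, Finset.mem_filter, Finset.mem_powersetCard]
      refine ⟨⟨Finset.subset_univ _, ?_⟩, Finset.subset_union_right⟩
      rw [Finset.card_union_of_disjoint hdisj, hAcard, ht]
      omega
    · intro S hS
      rw [Finset.mem_coe, Finset.mem_filter] at hS
      exact Finset.sdiff_union_of_subset hS.2
    · intro A hA
      rw [Finset.mem_coe, Finset.mem_powersetCard] at hA
      have hdisj : Disjoint A t := (Finset.subset_sdiff.mp hA.1).2
      beta_reduce
      rw [Finset.union_sdiff_right, Finset.sdiff_eq_self_of_disjoint hdisj]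
  rw [key, Finset.card_powersetCard, Finset.card_sdiff_of_subset (Finset.subset_univ _),
    Finset.card_univ, Fintype.card_fin, ht]

/-- Double counting faces against `s`-element vertex subsets. -/
lemma double_count {n : ℕ} (s : ℕ) (hs3 : 3 ≤ s) (F : Finset (Finset (Fin n)))
    (hF : ∀ t ∈ F, t.card = 3) :
    ∑ S ∈ (Finset.univ : Finset (Fin n)).powersetCard s, (F.filter (fun t => t ⊆ S)).card
      = F.card * (n - 3).choose (s - 3) := by
  classical
  calc ∑ S ∈ (Finset.univ : Finset (Fin n)).powersetCard s, (F.filter (fun t => t ⊆ S)).card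
      = ∑ S ∈ (Finset.univ : Finset (Fin n)).powersetCard s, ∑ t ∈ F,
          (if t ⊆ S then 1 else 0) := by
        refine Finset.sum_congr rfl fun S _ => ?_
        rw [Finset.card_filter]
    _ = ∑ t ∈ F, ∑ S ∈ (Finset.univ : Finset (Fin n)).powersetCard s,
          (if t ⊆ S then 1 else 0) := Finset.sum_comm
    _ = ∑ t ∈ F, (((Finset.univ : Finset (Fin n)).powersetCard s).filter
          (fun S => t ⊆ S)).card := by
        refine Finset.sum_congr rfl fun t _ => ?_
        rw [Finset.card_filter]
    _ = ∑ t ∈ F, (n - 3).choose (s - 3) := by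
        refine Finset.sum_congr rfl fun t htF => ?_
        exact count_supersets s hs3 t (hF t htF)
    _ = F.card * (n - 3).choose (s - 3) := by
        rw [Finset.sum_const, smul_eq_mul]

lemma six_choose_three (n : ℕ) : 6 * n.choose 3 ≤ n ^ 3 := by
  have h1 : n.choose 3 = n.descFactorial 3 / 6 := by
    rw [Nat.choose_eq_descFactorial_div_factorial]; norm_num [Nat.factorial]
  have h2 : (6 : ℕ) ∣ n.descFactorial 3 := by
    rw [(by norm_num [Nat.factorial] : (6 : ℕ) = Nat.factorial 3)]
    exact Nat.factorial_dvd_descFactorial n 3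
  rw [h1, Nat.mul_div_cancel' h2]
  exact Nat.descFactorial_le_pow n 3

/-- The binomial-coefficient inequality behind the averaging argument. -/
lemma choose_ineq {n m s : ℕ} (hs3 : 3 ≤ s) (hsn : s ≤ n) (hkey : n ^ 3 < 2 * (m * (s - 2))) :
    s.choose 2 * n.choose s < m * (n - 3).choose (s - 3) := by
  have hA : n.choose s * s.choose 3 = n.choose 3 * (n - 3).choose (s - 3) :=
    Nat.choose_mul hs3
  have hns : 0 < n.choose s := Nat.choose_pos hsn
  have hn3 : 0 < n.choose 3 := Nat.choose_pos (le_trans hs3 hsn)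
  have hs2 : 0 < s.choose 2 := Nat.choose_pos (by omega)
  have hstep : 3 * n.choose 3 < m * (s - 2) := by
    have := six_choose_three n
    omega
  have hB : s.choose 3 * 3 = s.choose 2 * (s - 2) := Nat.choose_succ_right_eq s 2
  have hstep2 : s.choose 2 * n.choose 3 * 3 < m * s.choose 3 * 3 := by
    calc s.choose 2 * n.choose 3 * 3 = s.choose 2 * (3 * n.choose 3) := by ring
      _ < s.choose 2 * (m * (s - 2)) := by exact mul_lt_mul_of_pos_left hstep hs2
      _ = m * (s.choose 2 * (s - 2)) := by ring
      _ = m * (s.choose 3 * 3) := by rw [hB]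
      _ = m * s.choose 3 * 3 := by ring
  have hstep3 : s.choose 2 * n.choose 3 < m * s.choose 3 := by omega
  have hstep4 : s.choose 2 * n.choose s * n.choose 3
      < m * (n - 3).choose (s - 3) * n.choose 3 := by
    calc s.choose 2 * n.choose s * n.choose 3 = (s.choose 2 * n.choose 3) * n.choose s := by ring
      _ < (m * s.choose 3) * n.choose s := mul_lt_mul_of_pos_right hstep3 hns
      _ = m * (n.choose s * s.choose 3) := by ring
      _ = m * (n.choose 3 * (n - 3).choose (s - 3)) := by rw [hA]
      _ = m * (n - 3).choose (s - 3) * n.choose 3 := by ring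
  exact Nat.lt_of_mul_lt_mul_right hstep4

set_option maxHeartbeats 1000000 in
/-- Main argument, proved as an auxiliary lemma. -/
lemma two_girth_upper_bound_aux (α : ℝ) (hα0 : 0 < α) (hα : α ≤ 1 / 2) :
    ∃ N : ℕ, ∀ n : ℕ, N ≤ n → ∀ F : Finset (Finset (Fin n)),
      (∀ t ∈ F, t.card = 3) → ((n : ℝ) ^ ((2 : ℝ) + α) ≤ F.card) →
      ∃ Z ⊆ F, Z.Nonempty ∧ IsTwoCycle Z ∧
        (Z.card : ℝ) ≤ 4 * (n : ℝ) ^ ((2 : ℝ) - 2 * α) := by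
  classical
  refine ⟨max 16 ⌈(3 : ℝ) ^ ((1 : ℝ) / α)⌉₊, fun n hn F hF3 hm => ?_⟩
  set m : ℕ := F.card with hmdef
  have hx16 : (16 : ℝ) ≤ (n : ℝ) := by
    have : 16 ≤ n := le_trans (le_max_left _ _) hn
    exact_mod_cast this
  have hx0 : (0 : ℝ) < (n : ℝ) := by linarith
  have hx1 : (1 : ℝ) ≤ (n : ℝ) := by linarith
  have hx3a : (3 : ℝ) ^ ((1 : ℝ) / α) ≤ (n : ℝ) :=
    Nat.ceil_le.mp (le_trans (le_max_right _ _) hn)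
  set p : ℝ := (n : ℝ) ^ ((1 : ℝ) - α) with hpdef
  have hp_pos : 0 < p := Real.rpow_pos_of_pos hx0 _
  have hhalf : (n : ℝ) ^ ((1 : ℝ) / 2) ≤ p := by
    apply Real.rpow_le_rpow_of_exponent_le hx1
    linarith
  have hsqrt16 : (4 : ℝ) ≤ (n : ℝ) ^ ((1 : ℝ) / 2) := by
    have h1 : (16 : ℝ) ^ ((1 : ℝ) / 2) ≤ (n : ℝ) ^ ((1 : ℝ) / 2) :=
      Real.rpow_le_rpow (by norm_num) hx16 (by norm_num)
    have h2 : (16 : ℝ) ^ ((1 : ℝ) / 2) = 4 := by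
      rw [show (16 : ℝ) = 4 ^ (2 : ℕ) by norm_num, ← Real.rpow_natCast 4 2,
        ← Real.rpow_mul (by norm_num)]
      norm_num
    linarith
  have hp4 : (4 : ℝ) ≤ p := by linarith
  have hxa3 : (3 : ℝ) ≤ (n : ℝ) ^ α := by
    have h1 : ((3 : ℝ) ^ ((1 : ℝ) / α)) ^ α ≤ (n : ℝ) ^ α :=
      Real.rpow_le_rpow (Real.rpow_nonneg (by norm_num) _) hx3a (le_of_lt hα0)
    rwa [← Real.rpow_mul (by norm_num), one_div, inv_mul_cancel₀ (ne_of_gt hα0),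
      Real.rpow_one] at h1
  have hpx : p * (n : ℝ) ^ α = (n : ℝ) := by
    rw [hpdef, ← Real.rpow_add hx0]
    norm_num
  have hpx3 : 3 * p ≤ (n : ℝ) := by nlinarith
  set s : ℕ := ⌈2 * p⌉₊ with hsdef
  have hs_lb : 2 * p ≤ (s : ℝ) := Nat.le_ceil _
  have hs_ub : (s : ℝ) ≤ 2 * p + 1 := le_of_lt (Nat.ceil_lt_add_one (by positivity))
  have hs3 : 3 ≤ s := by
    have : (3 : ℝ) ≤ (s : ℝ) := by linarith
    exact_mod_cast this
  have hsn : s ≤ n := by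
    have : (s : ℝ) ≤ (n : ℝ) := by linarith
    exact_mod_cast this
  -- key counting inequality
  have hkey : n ^ 3 < 2 * (m * (s - 2)) := by
    have hcast : ((s - 2 : ℕ) : ℝ) = (s : ℝ) - 2 := by
      have h2 : (2 : ℕ) ≤ s := by omega
      push_cast [Nat.cast_sub h2]; ring
    have hx25 : (n : ℝ) ^ ((2 : ℝ) + α) ≤ (n : ℝ) ^ ((5 : ℝ) / 2) :=
      Real.rpow_le_rpow_of_exponent_le hx1 (by linarith)
    have hx3eq : (n : ℝ) ^ ((2 : ℝ) + α) * p = (n : ℝ) ^ (3 : ℝ) := by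
      rw [hpdef, ← Real.rpow_add hx0]; norm_num
    have hx25b : 4 * (n : ℝ) ^ ((5 : ℝ) / 2) ≤ (n : ℝ) ^ (3 : ℝ) := by
      have heq : (n : ℝ) ^ ((5 : ℝ) / 2) * (n : ℝ) ^ ((1 : ℝ) / 2) = (n : ℝ) ^ (3 : ℝ) := by
        rw [← Real.rpow_add hx0]; norm_num
      nlinarith [Real.rpow_pos_of_pos hx0 ((5 : ℝ) / 2)]
    have hm0 : (0 : ℝ) ≤ (m : ℝ) := Nat.cast_nonneg m
    have h1 : (n : ℝ) ^ ((2 : ℝ) + α) * (2 * p - 2) ≤ (m : ℝ) * ((s : ℝ) - 2) :=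
      mul_le_mul hm (by linarith) (by linarith) hm0
    have hmain : (n : ℝ) ^ (3 : ℝ) < 2 * ((m : ℝ) * ((s : ℝ) - 2)) := by
      have h2 : (n : ℝ) ^ ((2 : ℝ) + α) * (2 * p - 2)
          = 2 * (n : ℝ) ^ (3 : ℝ) - 2 * (n : ℝ) ^ ((2 : ℝ) + α) := by
        rw [← hx3eq]; ring
      have hxpa_pos : (0 : ℝ) < (n : ℝ) ^ ((2 : ℝ) + α) := Real.rpow_pos_of_pos hx0 _
      linarith
    have hx3n : (n : ℝ) ^ (3 : ℝ) = ((n ^ 3 : ℕ) : ℝ) := by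
      rw [show (3 : ℝ) = ((3 : ℕ) : ℝ) by norm_num, Real.rpow_natCast]
      push_cast; ring
    rw [hx3n, ← hcast] at hmain
    exact_mod_cast hmain
  have hchoose : s.choose 2 * n.choose s < m * (n - 3).choose (s - 3) :=
    choose_ineq hs3 hsn hkey
  -- pigeonhole: some s-subset S contains more than choose s 2 faces
  have hsum := double_count (n := n) s hs3 F hF3
  have hpigeon : ∃ S ∈ (Finset.univ : Finset (Fin n)).powersetCard s,
      s.choose 2 < (F.filter (fun t => t ⊆ S)).card := by
    apply Finset.exists_lt_of_sum_lt
    rw [hsum, Finset.sum_const, smul_eq_mul, Finset.card_powersetCard, Finset.card_univ,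
      Fintype.card_fin]
    calc n.choose s * s.choose 2 = s.choose 2 * n.choose s := by ring
      _ < m * (n - 3).choose (s - 3) := hchoose
  obtain ⟨S, hSP, hSbig⟩ := hpigeon
  have hScard : S.card = s := (Finset.mem_powersetCard.mp hSP).2
  obtain ⟨F', hF'sub, hF'card⟩ :=
    Finset.exists_subset_card_eq (show s.choose 2 + 1 ≤ (F.filter (fun t => t ⊆ S)).card by omega)
  obtain ⟨Z, hZF', hZne, hZcyc⟩ := exists_small_cycle S F'
    (fun t ht => hF3 t (Finset.mem_filter.mp (hF'sub ht)).1)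
    (fun t ht => (Finset.mem_filter.mp (hF'sub ht)).2)
    (by rw [hScard, hF'card]; omega)
  refine ⟨Z, fun t ht => (Finset.mem_filter.mp (hF'sub (hZF' ht))).1, hZne, hZcyc, ?_⟩
  -- size bound
  have hZsize : Z.card ≤ s.choose 2 + 1 := hF'card ▸ Finset.card_le_card hZF'
  have hch : 2 * s.choose 2 ≤ s ^ 2 := by
    have h1 : 2 * (s * (s - 1) / 2) ≤ s * (s - 1) := Nat.mul_div_le (s * (s - 1)) 2
    have h2 : s * (s - 1) ≤ s * s := Nat.mul_le_mul_left s (Nat.sub_le s 1)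
    rw [Nat.choose_two_right]
    nlinarith
  have hchR : 2 * (s.choose 2 : ℝ) ≤ (s : ℝ) ^ 2 := by exact_mod_cast hch
  have hp2 : p * p = (n : ℝ) ^ ((2 : ℝ) - 2 * α) := by
    rw [hpdef, ← Real.rpow_add hx0]
    congr 1
    ring
  have hs2R : ((s : ℝ)) ^ 2 ≤ (2 * p + 1) ^ 2 :=
    pow_le_pow_left₀ (Nat.cast_nonneg s) (by linarith) 2
  have hZR : (Z.card : ℝ) ≤ (s.choose 2 : ℝ) + 1 := by exact_mod_cast hZsize
  have hexp : (2 * p + 1) ^ 2 = 4 * (p * p) + 4 * p + 1 := by ring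
  have hpp : 4 * p ≤ p * p := by nlinarith
  rw [← hp2]
  linarith

/-- **Theorem (2-girth upper bound, `0 < α ≤ 1/2`).**
For every real `α` with `0 < α ≤ 1/2` there exists `N` such that for all `n ≥ N`:
any 2-dimensional simplicial complex on `n` vertices (given by its set `F` of
3-element faces) with at least `n^(2+α)` faces contains a nontrivial `Z/2` 2-cycle
with at most `4 * n^(2-2α)` faces. -/
theorem two_girth_upper_bound (α : ℝ) (hα0 : 0 < α) (hα : α ≤ 1 / 2) :
    ∃ N : ℕ, ∀ n : ℕ, N ≤ n → ∀ F : Finset (Finset (Fin n)),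
      (∀ t ∈ F, t.card = 3) → ((n : ℝ) ^ ((2 : ℝ) + α) ≤ F.card) →
      ∃ Z ⊆ F, Z.Nonempty ∧ IsTwoCycle Z ∧
        (Z.card : ℝ) ≤ 4 * (n : ℝ) ^ ((2 : ℝ) - 2 * α) := by
  exact two_girth_upper_bound_aux α hα0 hα
end

section
/- Let Z be an inclusion-minimal Z/2 2-cycle with exactly f members, and let v be the number of vertices covered by the members of Z. Then √(2f) ≤ v ≤ f/2 + 2. In particular Z(f,v) = 0 unless √(2f) ≤ v ≤ f/2 + 2. -/
/-- An inclusion-minimal (nontrivial) `Z/2` 2-cycle: a nonempty 2-cycle no nonempty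
proper subset of which is a 2-cycle. -/
def IsMinCycle {V : Type} [DecidableEq V] (Z : Finset (Finset V)) : Prop :=
  IsTwoCycle Z ∧ Z.Nonempty ∧ ∀ Z' ⊂ Z, Z'.Nonempty → ¬ IsTwoCycle Z'

namespace MCA

abbrev F := ZMod 2

variable (Z : Finset (Finset ℕ))

def Es : Finset (Finset ℕ) := Z.biUnion (fun t => t.powersetCard 2)
def Vs : Finset ℕ := Z.biUnion id

lemma card_of_mem_Es {d} (hd : d ∈ Es Z) : d.card = 2 := by
  simp only [Es, Finset.mem_biUnion, Finset.mem_powersetCard] at hd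
  obtain ⟨t, _, _, h⟩ := hd; exact h

lemma exists_tri_of_mem_Es {d} (hd : d ∈ Es Z) : ∃ t ∈ Z, d ⊆ t := by
  simp only [Es, Finset.mem_biUnion, Finset.mem_powersetCard] at hd
  obtain ⟨t, ht, h, _⟩ := hd; exact ⟨t, ht, h⟩

lemma mem_Es_of_subset {d t} (ht : t ∈ Z) (hsub : d ⊆ t) (hcard : d.card = 2) : d ∈ Es Z := by
  simp only [Es, Finset.mem_biUnion, Finset.mem_powersetCard]
  exact ⟨t, ht, hsub, hcard⟩

lemma subset_Vs_of_mem {t} (ht : t ∈ Z) : t ⊆ Vs Z :=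
  fun a ha => Finset.mem_biUnion.2 ⟨t, ht, ha⟩

lemma Es_subset : Es Z ⊆ (Vs Z).powersetCard 2 := by
  intro d hd
  obtain ⟨t, ht, hsub⟩ := exists_tri_of_mem_Es Z hd
  exact Finset.mem_powersetCard.2 ⟨hsub.trans (subset_Vs_of_mem Z ht), card_of_mem_Es Z hd⟩

def sumMap {A B : Type} [Fintype A] (r : B → A → Prop) [∀ b a, Decidable (r b a)] :
    (A → F) →ₗ[F] (B → F) where
  toFun x b := ∑ a, if r b a then x a else 0
  map_add' x y := by
    funext b
    rw [Pi.add_apply, ← Finset.sum_add_distrib]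
    exact Finset.sum_congr rfl fun a _ => by split <;> simp
  map_smul' c x := by
    funext b
    simp only [RingHom.id_apply, Pi.smul_apply, smul_eq_mul, Finset.mul_sum]
    exact Finset.sum_congr rfl fun a _ => by split <;> simp

def d2 : (↥Z → F) →ₗ[F] (↥(Es Z) → F) :=
  sumMap (fun (d : ↥(Es Z)) (t : ↥Z) => (d : Finset ℕ) ⊆ (t : Finset ℕ))

def d1 : (↥(Es Z) → F) →ₗ[F] (↥(Vs Z) → F) :=
  sumMap (fun (u : ↥(Vs Z)) (d : ↥(Es Z)) => (u : ℕ) ∈ (d : Finset ℕ))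

lemma filter_eq_pow {t : Finset ℕ} (ht : t ∈ Z) (u : ℕ) :
    (Es Z).filter (fun d => u ∈ d ∧ d ⊆ t) = (t.powersetCard 2).filter (fun d => u ∈ d) := by
  ext d
  simp only [Finset.mem_filter, Finset.mem_powersetCard]
  exact ⟨fun ⟨hd, hu, hsub⟩ => ⟨⟨hsub, card_of_mem_Es Z hd⟩, hu⟩,
    fun ⟨⟨hsub, hc⟩, hu⟩ => ⟨mem_Es_of_subset Z ht hsub hc, hu, hsub⟩⟩

lemma card_pow_filter {t : Finset ℕ} (ht3 : t.card = 3) {u : ℕ} (hu : u ∈ t) :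
    ((t.powersetCard 2).filter (fun d => u ∈ d)).card = 2 := by
  have himg : (t.powersetCard 2).filter (fun d => u ∈ d)
      = (t.erase u).image (fun w => t.erase w) := by
    ext d
    simp only [Finset.mem_image, Finset.mem_filter, Finset.mem_powersetCard, Finset.mem_erase]
    constructor
    · rintro ⟨⟨hsub, hc⟩, hud⟩
      have hcard : (t \ d).card = 1 := by rw [Finset.card_sdiff_of_subset hsub, ht3, hc]
      obtain ⟨w, hw⟩ := Finset.card_eq_one.mp hcard
      have hwt : w ∈ t := by
        have := hw ▸ Finset.mem_singleton_self w
        exact (Finset.mem_sdiff.mp this).1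
      have hwd : w ∉ d := by
        have := hw ▸ Finset.mem_singleton_self w
        exact (Finset.mem_sdiff.mp this).2
      refine ⟨w, ⟨fun hwu => hwd (hwu ▸ hud), hwt⟩, ?_⟩
      apply (Finset.eq_of_subset_of_card_le ?_ ?_).symm
      · intro a ha; exact Finset.mem_erase.2 ⟨fun h => hwd (h ▸ ha), hsub ha⟩
      · rw [Finset.card_erase_of_mem hwt, ht3, hc]
    · rintro ⟨w, ⟨hwu, hwt⟩, rfl⟩
      exact ⟨⟨Finset.erase_subset _ _, by rw [Finset.card_erase_of_mem hwt, ht3]⟩,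
        Finset.mem_erase.2 ⟨fun h => hwu h.symm, hu⟩⟩
  rw [himg, Finset.card_image_of_injOn, Finset.card_erase_of_mem hu, ht3]
  intro w hw w' hw' h
  have hwt := (Finset.mem_erase.mp hw).2
  by_contra hne
  have hmem : w ∈ t.erase w' := Finset.mem_erase.2 ⟨hne, hwt⟩
  simp only at h
  rw [← h] at hmem
  exact (Finset.mem_erase.mp hmem).1 rfl

lemma d1_comp_d2 (hZ3 : ∀ t ∈ Z, t.card = 3) (x : ↥Z → F) : d1 Z (d2 Z x) = 0 := by
  funext u
  show (∑ d : ↥(Es Z), if (u:ℕ) ∈ (d:Finset ℕ) then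
      (∑ t : ↥Z, if (d:Finset ℕ) ⊆ (t:Finset ℕ) then x t else 0) else 0) = 0
  have step1 : ∀ d : ↥(Es Z),
      (if (u:ℕ) ∈ (d:Finset ℕ) then
        (∑ t : ↥Z, if (d:Finset ℕ) ⊆ (t:Finset ℕ) then x t else 0) else 0)
      = ∑ t : ↥Z, if (u:ℕ) ∈ (d:Finset ℕ) ∧ (d:Finset ℕ) ⊆ (t:Finset ℕ) then x t else 0 := by
    intro d
    split
    · exact Finset.sum_congr rfl fun t _ => by simp_all
    · rw [eq_comm, Finset.sum_eq_zero]; intro t _; simp_all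
  rw [Finset.sum_congr rfl fun d _ => step1 d, Finset.sum_comm]
  apply Finset.sum_eq_zero
  intro t _
  rw [Finset.sum_coe_sort (Es Z) (fun d => if (u:ℕ) ∈ d ∧ d ⊆ (t:Finset ℕ) then x t else 0),
    ← Finset.sum_filter, Finset.sum_const, nsmul_eq_mul]
  rw [filter_eq_pow Z t.2]
  by_cases hut : (u:ℕ) ∈ (t:Finset ℕ)
  · rw [card_pow_filter (hZ3 t t.2) hut]
    norm_num
    left
    decide
  · have : ((t:Finset ℕ).powersetCard 2).filter (fun d => (u:ℕ) ∈ d) = ∅ := by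
      apply Finset.filter_false_of_mem
      intro d hd
      exact fun hud => hut ((Finset.mem_powersetCard.mp hd).1 hud)
    rw [this]
    simp

lemma even_cast_zero {n : ℕ} (h : Even n) : (n : F) = 0 := by
  obtain ⟨k, rfl⟩ := h
  push_cast
  ring_nf
  rw [show (2 : F) = 0 from rfl]
  ring

lemma cast_zero_even {n : ℕ} (h : (n : F) = 0) : Even n := by
  have := (ZMod.natCast_eq_zero_iff n 2).mp h
  exact even_iff_two_dvd.mpr this

def ZS (x : ↥Z → F) : Finset (Finset ℕ) :=
  (Z.attach.filter (fun t => x t = 1)).image Subtype.val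

lemma ZS_subset (x : ↥Z → F) : ZS Z x ⊆ Z := by
  intro t ht
  simp only [ZS, Finset.mem_image, Finset.mem_filter] at ht
  obtain ⟨s, _, rfl⟩ := ht
  exact s.2

lemma card_ZS_filter (x : ↥Z → F) (d : Finset ℕ) :
    ((ZS Z x).filter (fun t => d ⊆ t)).card
      = (Z.attach.filter (fun t => x t = 1 ∧ d ⊆ t.val)).card := by
  rw [show (ZS Z x).filter (fun t => d ⊆ t)
      = (Z.attach.filter (fun t => x t = 1 ∧ d ⊆ t.val)).image Subtype.val by
    ext t
    simp only [ZS, Finset.mem_filter, Finset.mem_image, Finset.mem_filter]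
    constructor
    · rintro ⟨⟨s, ⟨hs0, hs1⟩, rfl⟩, hsub⟩
      exact ⟨s, ⟨hs0, hs1, hsub⟩, rfl⟩
    · rintro ⟨s, ⟨hs0, hs1, hs2⟩, rfl⟩
      exact ⟨⟨s, ⟨hs0, hs1⟩, rfl⟩, hs2⟩]
  exact Finset.card_image_of_injOn (Subtype.val_injective.injOn)

lemma d2_apply_eq_card (x : ↥Z → F) (d : ↥(Es Z)) :
    d2 Z x d = (((ZS Z x).filter (fun t => (d:Finset ℕ) ⊆ t)).card : F) := by
  rw [card_ZS_filter]
  show (∑ t : ↥Z, if (d:Finset ℕ) ⊆ (t:Finset ℕ) then x t else 0) = _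
  have key : ∀ t : ↥Z, (if (d:Finset ℕ) ⊆ (t:Finset ℕ) then x t else 0)
      = (if x t = 1 ∧ (d:Finset ℕ) ⊆ (t:Finset ℕ) then 1 else 0) := by
    intro t
    rcases (by decide : ∀ a : F, a = 0 ∨ a = 1) (x t) with h | h <;>
      · rw [h]; by_cases hs : (d:Finset ℕ) ⊆ (t:Finset ℕ) <;> simp [hs, h]
  rw [Finset.sum_congr rfl (fun t _ => key t), Finset.sum_boole, Finset.univ_eq_attach]

lemma ZS_twoCycle (hmin : IsMinCycle Z) (x : ↥Z → F) (hx : d2 Z x = 0) :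
    IsTwoCycle (ZS Z x) := by
  constructor
  · exact fun t ht => hmin.1.1 t (ZS_subset Z x ht)
  · intro d hd2
    by_cases hdE : d ∈ Es Z
    · apply cast_zero_even
      have := congrFun hx ⟨d, hdE⟩
      rw [d2_apply_eq_card] at this
      exact this
    · rw [Finset.filter_false_of_mem, Finset.card_empty]
      · exact Even.zero
      · intro t ht hsub
        exact hdE (mem_Es_of_subset Z (ZS_subset Z x ht) hsub hd2)

lemma ker_d2_char (hmin : IsMinCycle Z) (x : ↥Z → F) (hx : d2 Z x = 0) :
    x = 0 ∨ x = 1 := by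
  by_cases h0 : x = 0
  · exact Or.inl h0
  right
  have hne : (ZS Z x).Nonempty := by
    obtain ⟨t, ht⟩ := Function.ne_iff.mp h0
    have : x t = 1 := by
      rcases (by decide : ∀ a : F, a = 0 ∨ a = 1) (x t) with h | h
      · exact absurd h ht
      · exact h
    exact ⟨t.val, Finset.mem_image.mpr ⟨t, Finset.mem_filter.mpr ⟨Finset.mem_attach _ _, this⟩, rfl⟩⟩
  have heq : ZS Z x = Z := by
    by_contra hne2
    exact hmin.2.2 (ZS Z x) (lt_of_le_of_ne (ZS_subset Z x) hne2) hne (ZS_twoCycle Z hmin x hx)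
  funext t
  have : t.val ∈ ZS Z x := by rw [heq]; exact t.2
  simp only [ZS, Finset.mem_image, Finset.mem_filter] at this
  obtain ⟨s, ⟨_, hs1⟩, hval⟩ := this
  have : s = t := Subtype.ext hval
  rw [← this]
  exact hs1

lemma one_mem_ker (hZ : IsTwoCycle Z) : d2 Z (1 : ↥Z → F) = 0 := by
  funext d
  rw [d2_apply_eq_card]
  have hZS : ZS Z (1 : ↥Z → F) = Z := by
    have hfil : Z.attach.filter (fun t => (1 : ↥Z → F) t = 1) = Z.attach :=
      Finset.filter_true_of_mem (fun t _ => rfl)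
    rw [ZS, hfil, Finset.attach_image_val]
  rw [hZS]
  show _ = (0 : F)
  exact even_cast_zero (hZ.2 d.val (card_of_mem_Es Z d.2))

lemma ker_d2_eq (hmin : IsMinCycle Z) :
    LinearMap.ker (d2 Z) = Submodule.span F {(1 : ↥Z → F)} := by
  apply le_antisymm
  · intro x hx
    rcases ker_d2_char Z hmin x (LinearMap.mem_ker.mp hx) with h | h
    · rw [h]; exact Submodule.zero_mem _
    · rw [h]; exact Submodule.mem_span_singleton_self _
  · rw [Submodule.span_le, Set.singleton_subset_iff]
    exact LinearMap.mem_ker.mpr (one_mem_ker Z hmin.1)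

lemma finrank_ker_d2 (hmin : IsMinCycle Z) :
    Module.finrank F (LinearMap.ker (d2 Z)) = 1 := by
  rw [ker_d2_eq Z hmin]
  apply finrank_span_singleton
  obtain ⟨t0, ht0⟩ := hmin.2.1
  intro h
  have := congrFun h ⟨t0, ht0⟩
  exact one_ne_zero this


lemma mem_Vs {a} : a ∈ Vs Z ↔ ∃ t ∈ Z, a ∈ t := by simp [Vs]

def stepRel (a b : ℕ) : Prop := a ≠ b ∧ ({a, b} : Finset ℕ) ∈ Es Z

def Reach (a b : ℕ) : Prop := Relation.ReflTransGen (stepRel Z) a b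

lemma reach_of_mem_tri {t a b} (ht : t ∈ Z) (ha : a ∈ t) (hb : b ∈ t) : Reach Z a b := by
  by_cases hab : a = b
  · rw [hab]
    exact Relation.ReflTransGen.refl
  · apply Relation.ReflTransGen.single
    exact ⟨hab, mem_Es_of_subset Z ht
      (Finset.insert_subset ha (Finset.singleton_subset_iff.2 hb)) (Finset.card_pair hab)⟩

lemma reach_all (hmin : IsMinCycle Z) {u w : ℕ} (hu : u ∈ Vs Z) (hw : w ∈ Vs Z) :
    Reach Z u w := by
  classical
  set Z' := Z.filter (fun t => ∀ a ∈ t, Reach Z u a) with hZ'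
  have hsub : Z' ⊆ Z := Finset.filter_subset _ _
  have hne : Z'.Nonempty := by
    obtain ⟨t0, ht0, hut0⟩ := (mem_Vs Z).mp hu
    exact ⟨t0, Finset.mem_filter.2 ⟨ht0, fun a ha => reach_of_mem_tri Z ht0 hut0 ha⟩⟩
  have hcyc : IsTwoCycle Z' := by
    constructor
    · exact fun t ht => hmin.1.1 t (hsub ht)
    · intro d hd2
      by_cases hex : (Z'.filter (fun t => d ⊆ t)).Nonempty
      · obtain ⟨t0, ht0⟩ := hex
        obtain ⟨ht0Z', hdt0⟩ := Finset.mem_filter.mp ht0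
        obtain ⟨ht0Z, hreach⟩ := Finset.mem_filter.mp ht0Z'
        obtain ⟨b, hb⟩ := Finset.card_pos.mp (by rw [hd2]; norm_num)
        have hreachb : Reach Z u b := hreach b (hdt0 hb)
        have hfeq : Z'.filter (fun t => d ⊆ t) = Z.filter (fun t => d ⊆ t) := by
          ext t
          simp only [Finset.mem_filter, hZ', and_assoc]
          constructor
          · rintro ⟨htZ, -, hdt⟩
            exact ⟨htZ, hdt⟩
          · rintro ⟨htZ, hdt⟩
            exact ⟨htZ, fun a ha =>
              hreachb.trans (reach_of_mem_tri Z htZ (hdt hb) ha), hdt⟩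
        rw [hfeq]
        exact hmin.1.2 d hd2
      · rw [Finset.not_nonempty_iff_eq_empty.mp hex, Finset.card_empty]
        exact Even.zero
  have heq : Z' = Z := by
    by_contra h
    exact hmin.2.2 Z' (lt_of_le_of_ne hsub h) hne hcyc
  obtain ⟨t1, ht1, hwt1⟩ := (mem_Vs Z).mp hw
  have : t1 ∈ Z' := by rw [heq]; exact ht1
  exact (Finset.mem_filter.mp this).2 w hwt1

lemma mem_Vs_of_mem_Es {d a} (hd : d ∈ Es Z) (ha : a ∈ d) : a ∈ Vs Z := by
  obtain ⟨t, ht, hsub⟩ := exists_tri_of_mem_Es Z hd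
  exact subset_Vs_of_mem Z ht (hsub ha)

def eV (u : ↥(Vs Z)) : ↥(Vs Z) → F := Pi.single u 1
def eE (d : ↥(Es Z)) : ↥(Es Z) → F := Pi.single d 1

lemma eV_apply (u u' : ↥(Vs Z)) : eV Z u u' = if u' = u then 1 else 0 :=
  Pi.single_apply u 1 u'

lemma d1_single (D : ↥(Es Z)) (u' : ↥(Vs Z)) :
    d1 Z (eE Z D) u' = if (u':ℕ) ∈ (D:Finset ℕ) then 1 else 0 := by
  show (∑ d : ↥(Es Z), if (u':ℕ) ∈ (d:Finset ℕ) then eE Z D d else 0) = _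
  have key : ∀ d : ↥(Es Z), (if (u':ℕ) ∈ (d:Finset ℕ) then eE Z D d else 0)
      = (if d = D then (if (u':ℕ) ∈ (d:Finset ℕ) then (1:F) else 0) else 0) := by
    intro d
    rcases eq_or_ne d D with rfl | hne
    · simp [eE]
    · simp [eE, Pi.single_apply, hne]
  rw [Finset.sum_congr rfl (fun d _ => key d), Finset.sum_ite_eq' Finset.univ D]
  simp

lemma pair_mem_range {b c : ℕ} (hstep : stepRel Z b c) (hb : b ∈ Vs Z) (hc : c ∈ Vs Z) :
    eV Z ⟨b,hb⟩ + eV Z ⟨c,hc⟩ ∈ LinearMap.range (d1 Z) := by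
  obtain ⟨hne, hdE⟩ := hstep
  refine ⟨eE Z (⟨({b,c} : Finset ℕ), hdE⟩ : ↥(Es Z)), ?_⟩
  funext u'
  rw [d1_single]
  rw [Pi.add_apply, eV_apply, eV_apply]
  by_cases h1 : u' = (⟨b,hb⟩ : ↥(Vs Z)) <;> by_cases h2 : u' = (⟨c,hc⟩ : ↥(Vs Z))
  · exact absurd (by rw [h1] at h2; exact congrArg Subtype.val h2) hne
  · have hm : (u':ℕ) ∈ ({b,c} : Finset ℕ) := by
      rw [h1]; exact Finset.mem_insert_self _ _
    simp [h1, h2, hm, hne]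
  · have hm : (u':ℕ) ∈ ({b,c} : Finset ℕ) := by
      rw [h2]; exact Finset.mem_insert_of_mem (Finset.mem_singleton_self _)
    simp [h1, h2, hm, hne.symm]
  · have hm : (u':ℕ) ∉ ({b,c} : Finset ℕ) := by
      intro hmem
      rcases Finset.mem_insert.mp hmem with h | h
      · exact h1 (Subtype.ext h)
      · exact h2 (Subtype.ext (Finset.mem_singleton.mp h))
    simp [h1, h2, hm]

lemma reach_pair (u0 : ↥(Vs Z)) {w : ℕ} (hr : Reach Z (u0:ℕ) w) :
    ∀ hw : w ∈ Vs Z, eV Z u0 + eV Z ⟨w,hw⟩ ∈ LinearMap.range (d1 Z) := by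
  induction hr with
  | refl =>
    intro hw
    have hz : eV Z u0 + eV Z ⟨(u0:ℕ),hw⟩ = 0 := by
      have he : (⟨(u0:ℕ),hw⟩ : ↥(Vs Z)) = u0 := Subtype.ext rfl
      rw [he]
      funext i
      rw [Pi.add_apply, Pi.zero_apply]
      exact (by decide : ∀ x : F, x + x = 0) _
    rw [hz]
    exact Submodule.zero_mem _
  | @tail b c hab hbc ih =>
    intro hw
    have hb : b ∈ Vs Z := mem_Vs_of_mem_Es Z hbc.2 (Finset.mem_insert_self _ _)
    have h1 := ih hb
    have h2 := pair_mem_range Z hbc hb hw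
    have hadd := Submodule.add_mem _ h1 h2
    have heq : eV Z u0 + eV Z ⟨c,hw⟩
        = (eV Z u0 + eV Z ⟨b,hb⟩) + (eV Z ⟨b,hb⟩ + eV Z ⟨c,hw⟩) := by
      funext i
      simp only [Pi.add_apply]
      exact (by decide : ∀ x y z : F, x + z = (x + y) + (y + z)) _ _ _
    rw [heq]
    exact hadd

def sg : (↥(Vs Z) → F) →ₗ[F] F where
  toFun g := ∑ u, g u
  map_add' g h := by simp [Finset.sum_add_distrib]
  map_smul' c g := by simp [Finset.mul_sum]

lemma ker_sg_le_range_d1 (hmin : IsMinCycle Z) (u0 : ↥(Vs Z)) :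
    LinearMap.ker (sg Z) ≤ LinearMap.range (d1 Z) := by
  classical
  intro g hg
  set S := Finset.univ.filter (fun u : ↥(Vs Z) => g u = 1) with hS
  have hgS : g = ∑ u ∈ S, eV Z u := by
    funext u'
    rw [Finset.sum_apply]
    have key : ∀ u ∈ S, eV Z u u' = if u' = u then 1 else 0 :=
      fun u _ => eV_apply Z u u'
    rw [Finset.sum_congr rfl key, Finset.sum_ite_eq S u' (fun _ => (1:F))]
    by_cases hmem : u' ∈ S
    · have := (Finset.mem_filter.mp hmem).2
      simp [hmem, this]
    · have hne1 : ¬ g u' = 1 := fun h => hmem (Finset.mem_filter.2 ⟨Finset.mem_univ _, h⟩)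
      rcases (by decide : ∀ a : F, a = 0 ∨ a = 1) (g u') with h | h
      · simp [hmem, h]
      · exact absurd h hne1
  have hScard : Even S.card := by
    apply cast_zero_even
    have h1 : (S.card : F) = ∑ u : ↥(Vs Z), if g u = 1 then (1:F) else 0 := by
      rw [Finset.sum_boole, hS]
    have h2 : (∑ u : ↥(Vs Z), if g u = 1 then (1:F) else 0) = ∑ u : ↥(Vs Z), g u := by
      apply Finset.sum_congr rfl
      intro u _
      rcases (by decide : ∀ a : F, a = 0 ∨ a = 1) (g u) with h | h <;> simp [h]
    rw [h1, h2]
    exact hg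
  have hrw : g = ∑ u ∈ S, (eV Z u0 + eV Z u) := by
    rw [Finset.sum_add_distrib, Finset.sum_const]
    have hz : S.card • eV Z u0 = 0 := by
      rw [← Nat.cast_smul_eq_nsmul F, even_cast_zero hScard, zero_smul]
    rw [hz, zero_add, ← hgS]
  rw [hrw]
  apply Submodule.sum_mem
  intro u _
  have hr : Reach Z (u0:ℕ) (u:ℕ) := reach_all Z hmin u0.2 u.2
  have hres := reach_pair Z u0 hr u.2
  have : (⟨(u:ℕ), u.2⟩ : ↥(Vs Z)) = u := Subtype.ext rfl
  rw [this] at hres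
  exact hres

lemma range_d2_le_ker_d1 (hZ3 : ∀ t ∈ Z, t.card = 3) :
    LinearMap.range (d2 Z) ≤ LinearMap.ker (d1 Z) := by
  rintro _ ⟨x, rfl⟩
  exact LinearMap.mem_ker.mpr (d1_comp_d2 Z hZ3 x)

lemma filter_sub_eq_pow {t : Finset ℕ} (ht : t ∈ Z) :
    (Es Z).filter (fun d => d ⊆ t) = t.powersetCard 2 := by
  ext d
  simp only [Finset.mem_filter, Finset.mem_powersetCard]
  exact ⟨fun ⟨hd, hsub⟩ => ⟨hsub, card_of_mem_Es Z hd⟩,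
    fun ⟨hsub, hc⟩ => ⟨mem_Es_of_subset Z ht hsub hc, hsub⟩⟩

lemma double_count (hZ3 : ∀ t ∈ Z, t.card = 3) :
    ∑ d ∈ Es Z, (Z.filter (fun t => d ⊆ t)).card = 3 * Z.card := by
  have h1 : ∀ d ∈ Es Z, (Z.filter (fun t => d ⊆ t)).card
      = ∑ t ∈ Z, if d ⊆ t then 1 else 0 := by
    intro d _
    rw [Finset.sum_boole, Nat.cast_id]
  rw [Finset.sum_congr rfl h1, Finset.sum_comm]
  have h2 : ∀ t ∈ Z, (∑ d ∈ Es Z, if d ⊆ t then 1 else 0) = 3 := by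
    intro t ht
    rw [Finset.sum_boole, Nat.cast_id, filter_sub_eq_pow Z ht, Finset.card_powersetCard,
      hZ3 t ht]
    decide
  rw [Finset.sum_congr rfl h2, Finset.sum_const, smul_eq_mul, mul_comm]

lemma edge_count (hmin : IsMinCycle Z) : 2 * (Es Z).card ≤ 3 * Z.card := by
  rw [← double_count Z hmin.1.1]
  have : ∀ d ∈ Es Z, 2 ≤ (Z.filter (fun t => d ⊆ t)).card := by
    intro d hd
    have heven : Even ((Z.filter (fun t => d ⊆ t)).card) :=
      hmin.1.2 d (card_of_mem_Es Z hd)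
    have hpos : 0 < (Z.filter (fun t => d ⊆ t)).card := by
      obtain ⟨t, ht, hsub⟩ := exists_tri_of_mem_Es Z hd
      exact Finset.card_pos.mpr ⟨t, Finset.mem_filter.2 ⟨ht, hsub⟩⟩
    obtain ⟨k, hk⟩ := heven
    omega
  calc 2 * (Es Z).card = ∑ _d ∈ Es Z, 2 := by rw [Finset.sum_const, smul_eq_mul, mul_comm]
  _ ≤ ∑ d ∈ Es Z, (Z.filter (fun t => d ⊆ t)).card := Finset.sum_le_sum this

end MCA

open MCA in
/-- **Lemma (range of vertex numbers of a minimal 2-cycle).**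
If `Z` is an inclusion-minimal `Z/2` 2-cycle with exactly `f` members, and `v` is the
number of vertices covered by the members of `Z`, then `√(2f) ≤ v ≤ f/2 + 2`. -/
theorem minCycle_vertex_bounds (Z : Finset (Finset ℕ)) (hZ : IsMinCycle Z) (f v : ℕ)
    (hf : Z.card = f) (hv : (Z.biUnion id).card = v) :
    Real.sqrt (2 * f) ≤ v ∧ (v : ℝ) ≤ (f : ℝ) / 2 + 2 := by
  have hvv : (Vs Z).card = v := hv
  set e := (Es Z).card with he
  -- basic facts
  obtain ⟨t0, ht0⟩ := hZ.2.1
  have ht03 : t0.card = 3 := hZ.1.1 t0 ht0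
  have hv3 : 3 ≤ v := by
    rw [← hvv, ← ht03]
    exact Finset.card_le_card (subset_Vs_of_mem Z ht0)
  obtain ⟨a0, ha0⟩ := Finset.card_pos.mp (by rw [ht03]; norm_num : 0 < t0.card)
  have ha0V : a0 ∈ Vs Z := subset_Vs_of_mem Z ht0 ha0
  -- dimension bookkeeping
  have hdimZ : Module.finrank F (↥Z → F) = f := by
    rw [Module.finrank_pi, Fintype.card_coe, hf]
  have hdimE : Module.finrank F (↥(Es Z) → F) = e := by
    rw [Module.finrank_pi, Fintype.card_coe]
  have hdimV : Module.finrank F (↥(Vs Z) → F) = v := by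
    rw [Module.finrank_pi, Fintype.card_coe, hvv]
  have hrk2 : Module.finrank F (LinearMap.range (d2 Z)) + 1 = f := by
    rw [← finrank_ker_d2 Z hZ, LinearMap.finrank_range_add_finrank_ker, hdimZ]
  have hrk1 : Module.finrank F (LinearMap.range (d1 Z))
      + Module.finrank F (LinearMap.ker (d1 Z)) = e := by
    rw [LinearMap.finrank_range_add_finrank_ker, hdimE]
  have hle21 : Module.finrank F (LinearMap.range (d2 Z))
      ≤ Module.finrank F (LinearMap.ker (d1 Z)) :=
    Submodule.finrank_mono (range_d2_le_ker_d1 Z hZ.1.1)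
  have hsg : Module.finrank F (LinearMap.range (sg Z))
      + Module.finrank F (LinearMap.ker (sg Z)) = v := by
    rw [LinearMap.finrank_range_add_finrank_ker, hdimV]
  have hsgr : Module.finrank F (LinearMap.range (sg Z)) ≤ 1 := by
    have := Submodule.finrank_le (LinearMap.range (sg Z))
    rwa [Module.finrank_self] at this
  have hsgk : Module.finrank F (LinearMap.ker (sg Z))
      ≤ Module.finrank F (LinearMap.range (d1 Z)) :=
    Submodule.finrank_mono (ker_sg_le_range_d1 Z hZ ⟨a0, ha0V⟩)
  -- v + f ≤ e + 2
  have hvf : v + f ≤ e + 2 := by omega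
  -- f ≤ e + 1
  have hfe : f ≤ e + 1 := by omega
  -- 2e ≤ 3f
  have h2e3f : 2 * e ≤ 3 * f := by
    have := edge_count Z hZ
    rw [hf] at this
    exact this
  -- e ≤ v.choose 2
  have hechoose : 2 * e ≤ v * (v - 1) := by
    have h1 : e ≤ Nat.choose v 2 := by
      have := Finset.card_le_card (Es_subset Z)
      rwa [Finset.card_powersetCard, hvv] at this
    have h2 : Nat.choose v 2 = v * (v - 1) / 2 := Nat.choose_two_right v
    have h3 : 2 ∣ v * (v - 1) := Nat.even_mul_pred_self v |>.two_dvd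
    omega
  constructor
  · -- lower bound
    have h2f : 2 * f ≤ v * v := by
      have hh : 2 * f ≤ 2 * e + 2 := by omega
      obtain ⟨m, rfl⟩ := Nat.exists_eq_add_of_le hv3
      have hm : (3 + m) - 1 = 2 + m := by omega
      rw [hm] at hechoose
      nlinarith
    have hcast : (2 * f : ℝ) ≤ (v : ℝ) * (v : ℝ) := by exact_mod_cast h2f
    have := Real.sqrt_le_sqrt hcast
    rwa [show (v:ℝ) * (v:ℝ) = (v:ℝ)^2 by ring, Real.sqrt_sq (by positivity)] at this
  · -- upper bound
    have h2v : 2 * v ≤ f + 4 := by omega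
    have : (2 * v : ℝ) ≤ (f : ℝ) + 4 := by exact_mod_cast h2v
    linarith
end

section
/- There is a constant C > 0 such that for every even positive integer f and every connected triangulated closed surface X with f faces, the number of gluing stories g ∈ GS(f) for which the quotient complex X(g) is simplicially isomorphic to X is at least C^{−f} · f^{5f/2}. -/
/-- A connected triangulated closed surface on the vertex set `Fin w`, given by its
(nonempty) set `F` of 3-element faces: every edge lies in exactly two faces, the link
of every vertex is connected, any two faces are joined by a chain of faces in which
consecutive faces share an edge, and every vertex lies in some face. -/
def IsClosedSurface {w : ℕ} (F : Finset (Finset (Fin w))) : Prop :=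
  F.Nonempty ∧
  (∀ t ∈ F, t.card = 3) ∧
  (∀ e : Finset (Fin w), e.card = 2 → (∃ t ∈ F, e ⊆ t) →
    (F.filter (fun t => e ⊆ t)).card = 2) ∧
  (∀ v : Fin w, ∃ t ∈ F, v ∈ t) ∧
  (∀ v a b : Fin w,
    (∃ t ∈ F, v ∈ t ∧ a ∈ t ∧ a ≠ v) → (∃ t ∈ F, v ∈ t ∧ b ∈ t ∧ b ≠ v) →
    Relation.ReflTransGen (fun x y => ({v, x, y} : Finset (Fin w)) ∈ F) a b) ∧
  (∀ t ∈ F, ∀ t' ∈ F,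
    Relation.ReflTransGen (fun s s' => s ∈ F ∧ s' ∈ F ∧ (s ∩ s').card = 2) t t')

/-- A gluing story on `f` labelled triangles. Each triangle `j : Fin f` has three edge
slots indexed by `Fin 3` (slot `(j,a)` is the edge opposite corner `(j,a)`, with
endpoints the corners `(j,a+1)` and `(j,a+2)`). A gluing story is a sequence of `3f/2`
gluings, each consisting of an ordered pair of distinct edge slots together with a
`Bool` selecting one of the two bijections between the endpoint pairs, such that every
one of the `3f` slots occurs in exactly one gluing. -/
def GluingStory (f : ℕ) :=
  {g : Fin (3 * f / 2) → (Fin f × Fin 3) × (Fin f × Fin 3) × Bool //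
    (∀ k, (g k).1 ≠ (g k).2.1) ∧
    ∀ s : Fin f × Fin 3, ∃! k, s = (g k).1 ∨ s = (g k).2.1}

/-- The identifications of corners prescribed by the gluings of a gluing story: the
slot `(j,a)` has endpoint corners `(j,a+1)` and `(j,a+2)`, and each gluing identifies
the endpoints of its two slots according to the chosen bijection (the `Bool`). The
equivalence relation generated by this relation defines the vertices of the quotient
complex. -/
def cornerRel {f : ℕ} (g : GluingStory f) : Fin f × Fin 3 → Fin f × Fin 3 → Prop :=
  fun x y => ∃ k : Fin (3 * f / 2),
    (x = ((g.1 k).1.1, (g.1 k).1.2 + 1) ∧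
      y = ((g.1 k).2.1.1, (g.1 k).2.1.2 + (if (g.1 k).2.2 then 2 else 1))) ∨
    (x = ((g.1 k).1.1, (g.1 k).1.2 + 2) ∧
      y = ((g.1 k).2.1.1, (g.1 k).2.1.2 + (if (g.1 k).2.2 then 1 else 2)))

/-- `X(g)` is simplicially isomorphic to the complex `F` on `Fin w`: there is a
bijection `φ` from the `cornerRel`-classes to `Fin w` under which, for each triangle
`j`, the classes of its three corners are distinct and form a face of `F`, and
`j ↦ face` is a bijection between the `f` triangles and the faces of `F`. -/
def IsoToSurface {f w : ℕ} (g : GluingStory f) (F : Finset (Finset (Fin w))) : Prop :=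
  ∃ φ : Quot (cornerRel g) → Fin w, Function.Bijective φ ∧
    (∀ j : Fin f,
      ({φ (Quot.mk _ (j, 0)), φ (Quot.mk _ (j, 1)), φ (Quot.mk _ (j, 2))} :
        Finset (Fin w)).card = 3 ∧
      ({φ (Quot.mk _ (j, 0)), φ (Quot.mk _ (j, 1)), φ (Quot.mk _ (j, 2))} :
        Finset (Fin w)) ∈ F) ∧
    Function.Injective (fun j : Fin f =>
      ({φ (Quot.mk _ (j, 0)), φ (Quot.mk _ (j, 1)), φ (Quot.mk _ (j, 2))} :
        Finset (Fin w))) ∧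
    Finset.image (fun j : Fin f =>
      ({φ (Quot.mk _ (j, 0)), φ (Quot.mk _ (j, 1)), φ (Quot.mk _ (j, 2))} :
        Finset (Fin w))) Finset.univ = F


namespace Overc
open Finset

/-! ### Generalities -/

lemma f3_ne1 : ∀ a : Fin 3, a + 1 ≠ a := by decide
lemma f3_ne2 : ∀ a : Fin 3, a + 2 ≠ a := by decide
lemma f3_ne12 : ∀ a : Fin 3, a + 1 ≠ a + 2 := by decide
lemma f3_cases : ∀ a x : Fin 3, x = a ∨ x = a + 1 ∨ x = a + 2 := by decide
lemma f3_third : ∀ a o : Fin 3, a ≠ o → ∃ x, ∀ y, y = a ∨ y = o ∨ y = x := by decide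

def can {w : ℕ} (t : Finset (Fin w)) (h : t.card = 3) (a : Fin 3) : Fin w :=
  (t.orderIsoOfFin h a : Fin w)

lemma can_mem {w : ℕ} {t : Finset (Fin w)} (h : t.card = 3) (a : Fin 3) :
    can t h a ∈ t := (t.orderIsoOfFin h a).2

lemma can_inj {w : ℕ} {t : Finset (Fin w)} (h : t.card = 3) :
    Function.Injective (can t h) := fun a b hab =>
  (t.orderIsoOfFin h).injective (Subtype.ext hab)

lemma can_surj {w : ℕ} {t : Finset (Fin w)} (h : t.card = 3) {v : Fin w} (hv : v ∈ t) :
    ∃ a, can t h a = v :=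
  ⟨(t.orderIsoOfFin h).symm ⟨v, hv⟩,
    congrArg Subtype.val ((t.orderIsoOfFin h).apply_symm_apply ⟨v, hv⟩)⟩

lemma can_congr {w : ℕ} {t t' : Finset (Fin w)} {h : t.card = 3} {h' : t'.card = 3}
    (e : t = t') : can t h = can t' h' := by subst e; rfl

/-! ### Edges -/

def edges {w : ℕ} (F : Finset (Finset (Fin w))) : Finset (Finset (Fin w)) :=
  F.biUnion fun t => t.powersetCard 2

lemma mem_edges {w : ℕ} {F : Finset (Finset (Fin w))} {e : Finset (Fin w)} :
    e ∈ edges F ↔ ∃ t ∈ F, e ⊆ t ∧ e.card = 2 := by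
  simp [edges, Finset.mem_biUnion, Finset.mem_powersetCard]

lemma edge_card2 {w : ℕ} {F : Finset (Finset (Fin w))} {e : Finset (Fin w)}
    (he : e ∈ edges F) : e.card = 2 := by
  obtain ⟨t, _, _, hc⟩ := mem_edges.mp he; exact hc

section Main

variable {w f : ℕ} {F : Finset (Finset (Fin w))}
variable (hF : IsClosedSurface F) (σ : Fin f ≃ {t // t ∈ F})
variable (τ : Fin (3 * f / 2) ≃ {e // e ∈ edges F})
include hF

/-- Corner `a` of triangle `j`. -/
noncomputable def cj (j : Fin f) (a : Fin 3) : Fin w :=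
  can (σ j : Finset (Fin w)) (hF.2.1 _ (σ j).2) a

lemma cj_mem (j : Fin f) (a : Fin 3) : cj hF σ j a ∈ (σ j : Finset (Fin w)) :=
  can_mem _ _

lemma cj_inj (j : Fin f) : Function.Injective (cj hF σ j) := can_inj _

lemma cj_surj {j : Fin f} {v : Fin w} (hv : v ∈ (σ j : Finset (Fin w))) :
    ∃ a, cj hF σ j a = v := can_surj _ hv

lemma face_card (j : Fin f) : (σ j : Finset (Fin w)).card = 3 := hF.2.1 _ (σ j).2

lemma face_eq (j : Fin f) :
    ({cj hF σ j 0, cj hF σ j 1, cj hF σ j 2} : Finset (Fin w)) = (σ j : Finset (Fin w)) := by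
  have hsub : ({cj hF σ j 0, cj hF σ j 1, cj hF σ j 2} : Finset (Fin w)) ⊆ σ j := by
    intro v hv
    simp only [mem_insert, mem_singleton] at hv
    rcases hv with rfl | rfl | rfl <;> exact cj_mem hF σ j _
  have hcard : ({cj hF σ j 0, cj hF σ j 1, cj hF σ j 2} : Finset (Fin w)).card = 3 := by
    rw [card_insert_of_notMem, card_insert_of_notMem, card_singleton]
    · simp only [mem_singleton]
      intro h; exact (by decide : (1 : Fin 3) ≠ 2) (cj_inj hF σ j h)
    · simp only [mem_insert, mem_singleton]
      rintro (h | h)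
      · exact (by decide : (0 : Fin 3) ≠ 1) (cj_inj hF σ j h)
      · exact (by decide : (0 : Fin 3) ≠ 2) (cj_inj hF σ j h)
  exact Finset.eq_of_subset_of_card_le hsub (by rw [hcard, face_card hF σ j])

/-- Triangles containing a given edge. -/
def tri (e : Finset (Fin w)) : Finset (Fin f) :=
  Finset.univ.filter (fun j => e ⊆ (σ j : Finset (Fin w)))

lemma mem_tri {e : Finset (Fin w)} {j : Fin f} :
    j ∈ tri σ e ↔ e ⊆ (σ j : Finset (Fin w)) := by simp [tri]

lemma card_tri {e : Finset (Fin w)} (he : e ∈ edges F) : (tri σ e).card = 2 := by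
  obtain ⟨t, htF, hsub, hc2⟩ := mem_edges.mp he
  have h2 : (F.filter (fun t => e ⊆ t)).card = 2 := hF.2.2.1 e hc2 ⟨t, htF, hsub⟩
  rw [← h2]
  apply Finset.card_bij (fun j _ => (σ j : Finset (Fin w)))
  · intro j hj
    exact Finset.mem_filter.mpr ⟨(σ j).2, (mem_tri hF σ).mp hj⟩
  · intro j₁ _ j₂ _ h
    exact σ.injective (Subtype.ext h)
  · intro s hs
    obtain ⟨hsF, hsub'⟩ := Finset.mem_filter.mp hs
    exact ⟨σ.symm ⟨s, hsF⟩, (mem_tri hF σ).mpr (by rw [σ.apply_symm_apply]; exact hsub'),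
      by rw [σ.apply_symm_apply]⟩

/-- The corner of triangle `j` opposite the edge `e`. -/
noncomputable def opp (j : Fin f) (e : Finset (Fin w)) : Fin 3 :=
  if h : ∃ a, cj hF σ j a ∉ e then h.choose else 0

lemma opp_spec {j : Fin f} {e : Finset (Fin w)} (hsub : e ⊆ (σ j : Finset (Fin w)))
    (hc2 : e.card = 2) :
    cj hF σ j (opp hF σ j e) ∉ e ∧ ∀ a, cj hF σ j a ∉ e → a = opp hF σ j e := by
  have h3 := face_card hF σ j
  have hex : ∃ a, cj hF σ j a ∉ e := by
    have hns : ¬ (σ j : Finset (Fin w)) ⊆ e := by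
      intro hs
      have := Finset.card_le_card hs
      omega
    obtain ⟨v, hv, hve⟩ := Finset.not_subset.mp hns
    obtain ⟨a, ha⟩ := cj_surj hF σ hv
    exact ⟨a, ha ▸ hve⟩
  have hbase : cj hF σ j (opp hF σ j e) ∉ e := by
    rw [opp, dif_pos hex]; exact hex.choose_spec
  refine ⟨hbase, fun a ha => ?_⟩
  by_contra hne
  obtain ⟨x, hx⟩ := f3_third a (opp hF σ j e) hne
  have hsube : e ⊆ {cj hF σ j x} := by
    intro v hv
    obtain ⟨y, hy⟩ := cj_surj hF σ (hsub hv)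
    rcases hx y with rfl | rfl | rfl
    · exact absurd (hy ▸ hv) ha
    · exact absurd (hy ▸ hv) hbase
    · rw [mem_singleton, ← hy]
  have := Finset.card_le_card hsube
  simp [hc2] at this

/-- Edge in terms of the two corners adjacent to it. -/
lemma edge_eq {j : Fin f} {e : Finset (Fin w)} (hsub : e ⊆ (σ j : Finset (Fin w)))
    (hc2 : e.card = 2) :
    e = {cj hF σ j (opp hF σ j e + 1), cj hF σ j (opp hF σ j e + 2)} := by
  obtain ⟨h1, h2⟩ := opp_spec hF σ hsub hc2
  apply Finset.eq_of_subset_of_card_le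
  · intro v hv
    obtain ⟨y, hy⟩ := cj_surj hF σ (hsub hv)
    rcases f3_cases (opp hF σ j e) y with rfl | rfl | rfl
    · exact absurd (hy ▸ hv) h1
    · rw [← hy]; exact mem_insert_self _ _
    · rw [← hy]; exact mem_insert_of_mem (mem_singleton_self _)
  · calc ({cj hF σ j (opp hF σ j e + 1), cj hF σ j (opp hF σ j e + 2)} : Finset (Fin w)).card
        ≤ 2 := card_insert_le _ _ |>.trans (by rw [card_singleton])
    _ = e.card := hc2.symm

end Main
end Overc

namespace Overc
open Finset

section Main2

variable {w f : ℕ} {F : Finset (Finset (Fin w))}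
variable (hF : IsClosedSurface F) (σ : Fin f ≃ {t // t ∈ F})
variable (τ : Fin (3 * f / 2) ≃ {e // e ∈ edges F})
include hF

lemma tri_nonempty (k : Fin (3 * f / 2)) : (tri σ ((τ k : Finset (Fin w)))).Nonempty := by
  rw [← Finset.card_pos, card_tri hF σ (τ k).2]; norm_num

lemma one_lt_card_tri (k : Fin (3 * f / 2)) : 1 < (tri σ ((τ k : Finset (Fin w)))).card := by
  rw [card_tri hF σ (τ k).2]; norm_num

/-- The two triangles glued at step `k`. -/
noncomputable def j1 (k : Fin (3 * f / 2)) : Fin f :=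
  (tri σ ((τ k : Finset (Fin w)))).min' (tri_nonempty hF σ τ k)

noncomputable def j2 (k : Fin (3 * f / 2)) : Fin f :=
  (tri σ ((τ k : Finset (Fin w)))).max' (tri_nonempty hF σ τ k)

noncomputable def a1 (k : Fin (3 * f / 2)) : Fin 3 := opp hF σ (j1 hF σ τ k) (τ k)
noncomputable def a2 (k : Fin (3 * f / 2)) : Fin 3 := opp hF σ (j2 hF σ τ k) (τ k)

noncomputable def bb (k : Fin (3 * f / 2)) : Bool :=
  decide (cj hF σ (j2 hF σ τ k) (a2 hF σ τ k + 2) = cj hF σ (j1 hF σ τ k) (a1 hF σ τ k + 1))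

noncomputable def gfun (k : Fin (3 * f / 2)) :
    (Fin f × Fin 3) × (Fin f × Fin 3) × Bool :=
  ((j1 hF σ τ k, a1 hF σ τ k), (j2 hF σ τ k, a2 hF σ τ k), bb hF σ τ k)

lemma j1_lt_j2 (k : Fin (3 * f / 2)) : j1 hF σ τ k < j2 hF σ τ k :=
  Finset.min'_lt_max'_of_card _ (one_lt_card_tri hF σ τ k)

lemma j1_mem (k : Fin (3 * f / 2)) : j1 hF σ τ k ∈ tri σ ((τ k : Finset (Fin w))) :=
  Finset.min'_mem _ _

lemma j2_mem (k : Fin (3 * f / 2)) : j2 hF σ τ k ∈ tri σ ((τ k : Finset (Fin w))) :=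
  Finset.max'_mem _ _

lemma sub1 (k : Fin (3 * f / 2)) : (τ k : Finset (Fin w)) ⊆ (σ (j1 hF σ τ k) : Finset (Fin w)) :=
  (mem_tri hF σ).mp (j1_mem hF σ τ k)

lemma sub2 (k : Fin (3 * f / 2)) : (τ k : Finset (Fin w)) ⊆ (σ (j2 hF σ τ k) : Finset (Fin w)) :=
  (mem_tri hF σ).mp (j2_mem hF σ τ k)

lemma tri_eq (k : Fin (3 * f / 2)) :
    tri σ ((τ k : Finset (Fin w))) = {j1 hF σ τ k, j2 hF σ τ k} := by
  symm
  apply Finset.eq_of_subset_of_card_le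
  · intro j hj
    simp only [mem_insert, mem_singleton] at hj
    rcases hj with rfl | rfl
    · exact j1_mem hF σ τ k
    · exact j2_mem hF σ τ k
  · rw [card_tri hF σ (τ k).2]
    rw [card_insert_of_notMem (by simp [(j1_lt_j2 hF σ τ k).ne]), card_singleton]

lemma edge_eq1 (k : Fin (3 * f / 2)) :
    (τ k : Finset (Fin w)) =
      {cj hF σ (j1 hF σ τ k) (a1 hF σ τ k + 1), cj hF σ (j1 hF σ τ k) (a1 hF σ τ k + 2)} :=
  edge_eq hF σ (sub1 hF σ τ k) (edge_card2 (τ k).2)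

lemma edge_eq2 (k : Fin (3 * f / 2)) :
    (τ k : Finset (Fin w)) =
      {cj hF σ (j2 hF σ τ k) (a2 hF σ τ k + 1), cj hF σ (j2 hF σ τ k) (a2 hF σ τ k + 2)} :=
  edge_eq hF σ (sub2 hF σ τ k) (edge_card2 (τ k).2)

lemma bool_spec (k : Fin (3 * f / 2)) :
    cj hF σ (j2 hF σ τ k) (a2 hF σ τ k + (if bb hF σ τ k then 2 else 1)) =
        cj hF σ (j1 hF σ τ k) (a1 hF σ τ k + 1) ∧
    cj hF σ (j2 hF σ τ k) (a2 hF σ τ k + (if bb hF σ τ k then 1 else 2)) =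
        cj hF σ (j1 hF σ τ k) (a1 hF σ τ k + 2) := by
  set i1 := j1 hF σ τ k
  set i2 := j2 hF σ τ k
  set b1 := a1 hF σ τ k
  set b2 := a2 hF σ τ k
  have h21 : cj hF σ i2 (b2 + 1) ∈ ({cj hF σ i1 (b1 + 1), cj hF σ i1 (b1 + 2)} : Finset (Fin w)) := by
    rw [← edge_eq1 hF σ τ k, edge_eq2 hF σ τ k]; exact mem_insert_self _ _
  have h22 : cj hF σ i2 (b2 + 2) ∈ ({cj hF σ i1 (b1 + 1), cj hF σ i1 (b1 + 2)} : Finset (Fin w)) := by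
    rw [← edge_eq1 hF σ τ k, edge_eq2 hF σ τ k]; exact mem_insert_of_mem (mem_singleton_self _)
  simp only [mem_insert, mem_singleton] at h21 h22
  have hne2 : cj hF σ i2 (b2 + 1) ≠ cj hF σ i2 (b2 + 2) :=
    fun h => f3_ne12 b2 (cj_inj hF σ i2 h)
  by_cases hb : cj hF σ i2 (b2 + 2) = cj hF σ i1 (b1 + 1)
  · have hbT : bb hF σ τ k = true := by rw [bb]; exact decide_eq_true hb
    simp only [hbT, if_true]
    refine ⟨hb, ?_⟩
    rcases h21 with h | h
    · exact absurd (h.trans hb.symm) hne2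
    · exact h
  · have hbF : bb hF σ τ k = false := by rw [bb]; exact decide_eq_false hb
    simp only [hbF, Bool.false_eq_true, if_false]
    have h22' : cj hF σ i2 (b2 + 2) = cj hF σ i1 (b1 + 2) := h22.resolve_left hb
    refine ⟨?_, h22'⟩
    rcases h21 with h | h
    · exact h
    · exact absurd (h.trans h22'.symm) hne2

/-- The edge glued by slot `s`. -/
noncomputable def slotEdge (s : Fin f × Fin 3) : Finset (Fin w) :=
  {cj hF σ s.1 (s.2 + 1), cj hF σ s.1 (s.2 + 2)}

lemma slotEdge_card (s : Fin f × Fin 3) : (slotEdge hF σ s).card = 2 := by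
  have hnm : cj hF σ s.1 (s.2 + 1) ∉ ({cj hF σ s.1 (s.2 + 2)} : Finset (Fin w)) := by
    simp only [mem_singleton]
    exact fun h => f3_ne12 s.2 (cj_inj hF σ s.1 h)
  rw [slotEdge, card_insert_of_notMem hnm, card_singleton]

lemma slotEdge_sub (s : Fin f × Fin 3) : slotEdge hF σ s ⊆ (σ s.1 : Finset (Fin w)) := by
  rw [slotEdge]
  exact insert_subset (cj_mem hF σ _ _) (singleton_subset_iff.mpr (cj_mem hF σ _ _))

lemma slotEdge_mem (s : Fin f × Fin 3) : slotEdge hF σ s ∈ edges F :=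
  mem_edges.mpr ⟨σ s.1, (σ s.1).2, slotEdge_sub hF σ s, slotEdge_card hF σ s⟩

lemma not_mem_slotEdge (s : Fin f × Fin 3) : cj hF σ s.1 s.2 ∉ slotEdge hF σ s := by
  rw [slotEdge]
  simp only [mem_insert, mem_singleton]
  rintro (h | h)
  · exact f3_ne1 s.2 (cj_inj hF σ s.1 h).symm
  · exact f3_ne2 s.2 (cj_inj hF σ s.1 h).symm

lemma occ_iff (k : Fin (3 * f / 2)) (s : Fin f × Fin 3) :
    (s = (gfun hF σ τ k).1 ∨ s = (gfun hF σ τ k).2.1) ↔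
      (τ k : Finset (Fin w)) = slotEdge hF σ s := by
  constructor
  · rintro (rfl | rfl)
    · exact edge_eq1 hF σ τ k
    · exact edge_eq2 hF σ τ k
  · intro h
    have hsub : (τ k : Finset (Fin w)) ⊆ (σ s.1 : Finset (Fin w)) := by
      rw [h]; exact slotEdge_sub hF σ s
    have hj : s.1 ∈ tri σ ((τ k : Finset (Fin w))) := (mem_tri hF σ).mpr hsub
    have hnm : cj hF σ s.1 s.2 ∉ (τ k : Finset (Fin w)) := by
      rw [h]; exact not_mem_slotEdge hF σ s
    have ha : s.2 = opp hF σ s.1 (τ k) :=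
      (opp_spec hF σ hsub (edge_card2 (τ k).2)).2 s.2 hnm
    rw [tri_eq hF σ τ k] at hj
    simp only [mem_insert, mem_singleton] at hj
    rcases hj with h1 | h2
    · left
      rw [gfun]
      ext : 1
      · exact h1
      · rw [a1, ← h1]; exact ha
    · right
      rw [gfun]
      ext : 1
      · exact h2
      · rw [a2, ← h2]; exact ha

/-- The gluing story determined by `σ` and `τ`. -/
noncomputable def story : GluingStory f := by
  refine ⟨gfun hF σ τ, fun k => ?_, fun s => ?_⟩
  · rw [gfun]
    intro h
    exact absurd (congrArg Prod.fst h) (j1_lt_j2 hF σ τ k).ne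
  · refine ⟨τ.symm ⟨slotEdge hF σ s, slotEdge_mem hF σ s⟩, ?_, ?_⟩
    · exact (occ_iff hF σ τ _ s).mpr (by rw [Equiv.apply_symm_apply])
    · intro k hk
      have h := (occ_iff hF σ τ k s).mp hk
      have : τ k = ⟨slotEdge hF σ s, slotEdge_mem hF σ s⟩ := Subtype.ext h
      rw [← this, Equiv.symm_apply_apply]

lemma story_coe : (story hF σ τ).1 = gfun hF σ τ := rfl

end Main2
end Overc

namespace Overc
open Finset

section Main3

variable {w f : ℕ} {F : Finset (Finset (Fin w))}
variable (hF : IsClosedSurface F) (σ : Fin f ≃ {t // t ∈ F})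
variable (τ : Fin (3 * f / 2) ≃ {e // e ∈ edges F})
include hF

/-- Index of vertex `v` among the corners of triangle `j`. -/
noncomputable def vidx (j : Fin f) (v : Fin w) : Fin 3 :=
  if h : ∃ a, cj hF σ j a = v then h.choose else 0

lemma vidx_unique {j : Fin f} {v : Fin w} {a : Fin 3} (ha : cj hF σ j a = v) :
    a = vidx hF σ j v := by
  have hex : ∃ a, cj hF σ j a = v := ⟨a, ha⟩
  have : cj hF σ j (vidx hF σ j v) = v := by
    rw [vidx, dif_pos hex]; exact hex.choose_spec
  exact cj_inj hF σ j (ha.trans this.symm)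

lemma vidx_spec {j : Fin f} {v : Fin w} (hv : v ∈ (σ j : Finset (Fin w))) :
    cj hF σ j (vidx hF σ j v) = v := by
  obtain ⟨a, ha⟩ := cj_surj hF σ hv
  rw [← vidx_unique hF σ ha]; exact ha

lemma descent {x y : Fin f × Fin 3} (hxy : cornerRel (story hF σ τ) x y) :
    cj hF σ x.1 x.2 = cj hF σ y.1 y.2 := by
  obtain ⟨k, h | h⟩ := hxy
  · rw [h.1, h.2]
    exact ((bool_spec hF σ τ k).1).symm
  · rw [h.1, h.2]
    exact ((bool_spec hF σ τ k).2).symm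

lemma corner_glue (k : Fin (3 * f / 2)) {v : Fin w}
    (hv : v ∈ (τ k : Finset (Fin w))) :
    Quot.mk (cornerRel (story hF σ τ)) (j1 hF σ τ k, vidx hF σ (j1 hF σ τ k) v) =
      Quot.mk (cornerRel (story hF σ τ)) (j2 hF σ τ k, vidx hF σ (j2 hF σ τ k) v) := by
  rw [edge_eq1 hF σ τ k] at hv
  simp only [mem_insert, mem_singleton] at hv
  rcases hv with hv | hv
  · have h1 : vidx hF σ (j1 hF σ τ k) v = a1 hF σ τ k + 1 := (vidx_unique hF σ hv.symm).symm
    have hrel : cornerRel (story hF σ τ) (j1 hF σ τ k, a1 hF σ τ k + 1)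
        (j2 hF σ τ k, a2 hF σ τ k + (if bb hF σ τ k then 2 else 1)) :=
      ⟨k, Or.inl ⟨rfl, rfl⟩⟩
    have h2 : vidx hF σ (j2 hF σ τ k) v = a2 hF σ τ k + (if bb hF σ τ k then 2 else 1) := by
      refine (vidx_unique hF σ ?_).symm
      rw [(bool_spec hF σ τ k).1, ← hv]
    rw [h1, h2]
    exact Quot.sound hrel
  · have h1 : vidx hF σ (j1 hF σ τ k) v = a1 hF σ τ k + 2 := (vidx_unique hF σ hv.symm).symm
    have hrel : cornerRel (story hF σ τ) (j1 hF σ τ k, a1 hF σ τ k + 2)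
        (j2 hF σ τ k, a2 hF σ τ k + (if bb hF σ τ k then 1 else 2)) :=
      ⟨k, Or.inr ⟨rfl, rfl⟩⟩
    have h2 : vidx hF σ (j2 hF σ τ k) v = a2 hF σ τ k + (if bb hF σ τ k then 1 else 2) := by
      refine (vidx_unique hF σ ?_).symm
      rw [(bool_spec hF σ τ k).2, ← hv]
    rw [h1, h2]
    exact Quot.sound hrel

lemma quot_eq_of_edge {j j' : Fin f} {v u : Fin w} (hu : u ≠ v)
    (h1 : ({v, u} : Finset (Fin w)) ⊆ (σ j : Finset (Fin w)))
    (h2 : ({v, u} : Finset (Fin w)) ⊆ (σ j' : Finset (Fin w))) :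
    Quot.mk (cornerRel (story hF σ τ)) (j, vidx hF σ j v) =
      Quot.mk (cornerRel (story hF σ τ)) (j', vidx hF σ j' v) := by
  by_cases hjj : j = j'
  · subst hjj; rfl
  · have hece : ({v, u} : Finset (Fin w)).card = 2 := by
      rw [card_insert_of_notMem (by simpa using hu.symm), card_singleton]
    have he : ({v, u} : Finset (Fin w)) ∈ edges F :=
      mem_edges.mpr ⟨σ j, (σ j).2, h1, hece⟩
    set k := τ.symm ⟨{v, u}, he⟩ with hk
    have hτk : (τ k : Finset (Fin w)) = {v, u} := by rw [hk, Equiv.apply_symm_apply]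
    have hv : v ∈ (τ k : Finset (Fin w)) := by rw [hτk]; exact mem_insert_self _ _
    have hjt : j ∈ tri σ ((τ k : Finset (Fin w))) := (mem_tri hF σ).mpr (by rw [hτk]; exact h1)
    have hjt' : j' ∈ tri σ ((τ k : Finset (Fin w))) := (mem_tri hF σ).mpr (by rw [hτk]; exact h2)
    rw [tri_eq hF σ τ k] at hjt hjt'
    simp only [mem_insert, mem_singleton] at hjt hjt'
    rcases hjt with rfl | rfl <;> rcases hjt' with h' | h'
    · exact absurd h'.symm hjj
    · rw [h']; exact corner_glue hF σ τ k hv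
    · rw [h']; exact (corner_glue hF σ τ k hv).symm
    · exact absurd h'.symm hjj

lemma quot_eq_chain {v p p' : Fin w}
    (hch : Relation.ReflTransGen (fun x y => ({v, x, y} : Finset (Fin w)) ∈ F) p p') :
    ∀ {j j' : Fin f}, v ∈ (σ j : Finset (Fin w)) → p ∈ (σ j : Finset (Fin w)) → p ≠ v →
      v ∈ (σ j' : Finset (Fin w)) → p' ∈ (σ j' : Finset (Fin w)) → p' ≠ v →
    Quot.mk (cornerRel (story hF σ τ)) (j, vidx hF σ j v) =
      Quot.mk (cornerRel (story hF σ τ)) (j', vidx hF σ j' v) := by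
  induction hch with
  | refl =>
    intro j j' hvj hpj hpv hvj' hpj' hpv'
    exact quot_eq_of_edge hF σ τ hpv
      (insert_subset hvj (singleton_subset_iff.mpr hpj))
      (insert_subset hvj' (singleton_subset_iff.mpr hpj'))
  | @tail b c hab hbc ih =>
    intro j j' hvj hpj hpv hvj' hpj' hpv'
    set jm := σ.symm ⟨{v, b, c}, hbc⟩ with hjm
    have hface : (σ jm : Finset (Fin w)) = {v, b, c} := by rw [hjm, Equiv.apply_symm_apply]
    have hc3 : ({v, b, c} : Finset (Fin w)).card = 3 := hF.2.1 _ hbc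
    have hbv : b ≠ v := by
      intro h
      rw [h, Finset.insert_idem] at hc3
      have hle := Finset.card_insert_le v ({c} : Finset (Fin w))
      rw [hc3, card_singleton] at hle
      omega
    have hvm : v ∈ (σ jm : Finset (Fin w)) := by rw [hface]; exact mem_insert_self _ _
    have hbm : b ∈ (σ jm : Finset (Fin w)) := by
      rw [hface]; exact mem_insert_of_mem (mem_insert_self _ _)
    have hcm : c ∈ (σ jm : Finset (Fin w)) := by
      rw [hface]; exact mem_insert_of_mem (mem_insert_of_mem (mem_singleton_self _))
    have hstep1 := ih hvj hpj hpv hvm hbm hbv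
    have hstep2 := quot_eq_of_edge hF σ τ (j := jm) (j' := j') hpv'
      (insert_subset hvm (singleton_subset_iff.mpr hcm))
      (insert_subset hvj' (singleton_subset_iff.mpr hpj'))
    exact hstep1.trans hstep2

lemma quot_eq_of_cj_eq {x y : Fin f × Fin 3} (h : cj hF σ x.1 x.2 = cj hF σ y.1 y.2) :
    Quot.mk (cornerRel (story hF σ τ)) x = Quot.mk (cornerRel (story hF σ τ)) y := by
  obtain ⟨j, a⟩ := x
  obtain ⟨j', a'⟩ := y
  simp only at h
  set v := cj hF σ j a with hv
  have hvj : v ∈ (σ j : Finset (Fin w)) := cj_mem hF σ j a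
  have hvj' : v ∈ (σ j' : Finset (Fin w)) := h ▸ cj_mem hF σ j' a'
  obtain ⟨p, hp, hpv⟩ := Finset.exists_mem_ne (by rw [face_card hF σ j]; norm_num) v
  obtain ⟨p', hp', hpv'⟩ :=
    Finset.exists_mem_ne (by rw [face_card hF σ j']; norm_num) v
  have hch := hF.2.2.2.2.1 v p p' ⟨σ j, (σ j).2, hvj, hp, hpv⟩ ⟨σ j', (σ j').2, hvj', hp', hpv'⟩
  have hmain := quot_eq_chain hF σ τ hch hvj hp hpv hvj' hp' hpv'
  have ha : vidx hF σ j v = a := (vidx_unique hF σ hv.symm).symm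
  have ha' : vidx hF σ j' v = a' := (vidx_unique hF σ h.symm).symm
  rw [ha, ha'] at hmain
  exact hmain

/-- The simplicial isomorphism. -/
noncomputable def phi : Quot (cornerRel (story hF σ τ)) → Fin w :=
  Quot.lift (fun x => cj hF σ x.1 x.2) (fun _ _ hxy => descent hF σ τ hxy)

lemma phi_mk (x : Fin f × Fin 3) :
    phi hF σ τ (Quot.mk (cornerRel (story hF σ τ)) x) = cj hF σ x.1 x.2 := rfl

lemma phi_bijective : Function.Bijective (phi hF σ τ) := by
  constructor
  · intro x y h
    induction x using Quot.ind with | _ x =>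
    induction y using Quot.ind with | _ y =>
    exact quot_eq_of_cj_eq hF σ τ h
  · intro v
    obtain ⟨t, htF, hvt⟩ := hF.2.2.2.1 v
    have hvt' : v ∈ (σ (σ.symm ⟨t, htF⟩) : Finset (Fin w)) := by
      rw [Equiv.apply_symm_apply]; exact hvt
    exact ⟨Quot.mk _ (σ.symm ⟨t, htF⟩, vidx hF σ (σ.symm ⟨t, htF⟩) v),
      vidx_spec hF σ hvt'⟩

lemma phi_face (j : Fin f) :
    ({phi hF σ τ (Quot.mk _ (j, 0)), phi hF σ τ (Quot.mk _ (j, 1)),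
      phi hF σ τ (Quot.mk _ (j, 2))} : Finset (Fin w)) = (σ j : Finset (Fin w)) := by
  rw [phi_mk, phi_mk, phi_mk]
  exact face_eq hF σ j

lemma story_iso : IsoToSurface (story hF σ τ) F := by
  refine ⟨phi hF σ τ, phi_bijective hF σ τ, fun j => ⟨?_, ?_⟩, ?_, ?_⟩
  · rw [phi_face hF σ τ j]; exact face_card hF σ j
  · rw [phi_face hF σ τ j]; exact (σ j).2
  · intro j j' h
    simp only [phi_face hF σ τ] at h
    exact σ.injective (Subtype.ext h)
  · ext t
    simp only [Finset.mem_image, Finset.mem_univ, true_and, phi_face hF σ τ]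
    constructor
    · rintro ⟨j, rfl⟩; exact (σ j).2
    · intro ht; exact ⟨σ.symm ⟨t, ht⟩, by rw [Equiv.apply_symm_apply]⟩

end Main3
end Overc

namespace Overc
open Finset

section Main4

variable {w f : ℕ} {F : Finset (Finset (Fin w))}
variable (hF : IsClosedSurface F) (σ σ' : Fin f ≃ {t // t ∈ F})
variable (τ τ' : Fin (3 * f / 2) ≃ {e // e ∈ edges F})
include hF

lemma cj_congr {j : Fin f} (h : σ j = σ' j) : cj hF σ j = cj hF σ' j := by
  unfold cj
  exact can_congr (congrArg Subtype.val h)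

lemma two_elt_eq {S : Finset (Finset (Fin w))} (hS : S.card = 2)
    {x y z : Finset (Fin w)} (hx : x ∈ S) (hy : y ∈ S) (hz : z ∈ S)
    (hxz : x ≠ z) (hyz : y ≠ z) : x = y := by
  obtain ⟨u, v, huv, rfl⟩ := Finset.card_eq_two.mp hS
  simp only [mem_insert, mem_singleton] at hx hy hz
  rcases hx with rfl | rfl <;> rcases hy with rfl | rfl <;> rcases hz with rfl | rfl <;>
    first | rfl | (exact absurd rfl hxz) | (exact absurd rfl hyz)

lemma gfun_comp_eq (hg : gfun hF σ τ = gfun hF σ' τ') (k : Fin (3 * f / 2)) :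
    j1 hF σ' τ' k = j1 hF σ τ k ∧ a1 hF σ' τ' k = a1 hF σ τ k ∧
    j2 hF σ' τ' k = j2 hF σ τ k ∧ a2 hF σ' τ' k = a2 hF σ τ k := by
  have h := congrFun hg k
  rw [gfun, gfun] at h
  exact ⟨(congrArg (fun z => z.1.1) h).symm, (congrArg (fun z => z.1.2) h).symm,
    (congrArg (fun z => z.2.1.1) h).symm, (congrArg (fun z => z.2.1.2) h).symm⟩

lemma sigma_step (hg : gfun hF σ τ = gfun hF σ' τ') (k : Fin (3 * f / 2)) :
    (σ (j1 hF σ τ k) = σ' (j1 hF σ τ k) → σ (j2 hF σ τ k) = σ' (j2 hF σ τ k)) ∧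
    (σ (j2 hF σ τ k) = σ' (j2 hF σ τ k) → σ (j1 hF σ τ k) = σ' (j1 hF σ τ k)) := by
  obtain ⟨hj1, ha1, hj2, ha2⟩ := gfun_comp_eq hF σ σ' τ τ' hg k
  have hne12 : j1 hF σ τ k ≠ j2 hF σ τ k := (j1_lt_j2 hF σ τ k).ne
  constructor
  · intro h1
    have hee : (τ' k : Finset (Fin w)) = (τ k : Finset (Fin w)) := by
      rw [edge_eq1 hF σ' τ' k, edge_eq1 hF σ τ k, hj1, ha1, cj_congr hF σ σ' h1]
    have hS : (F.filter (fun t => (τ k : Finset (Fin w)) ⊆ t)).card = 2 :=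
      hF.2.2.1 _ (edge_card2 (τ k).2) ⟨σ (j1 hF σ τ k), (σ _).2, sub1 hF σ τ k⟩
    have hm1 : (σ (j1 hF σ τ k) : Finset (Fin w)) ∈ F.filter (fun t => (τ k : Finset (Fin w)) ⊆ t) :=
      Finset.mem_filter.mpr ⟨(σ _).2, sub1 hF σ τ k⟩
    have hm2 : (σ (j2 hF σ τ k) : Finset (Fin w)) ∈ F.filter (fun t => (τ k : Finset (Fin w)) ⊆ t) :=
      Finset.mem_filter.mpr ⟨(σ _).2, sub2 hF σ τ k⟩
    have hm2' : (σ' (j2 hF σ τ k) : Finset (Fin w)) ∈ F.filter (fun t => (τ k : Finset (Fin w)) ⊆ t) := by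
      refine Finset.mem_filter.mpr ⟨(σ' _).2, ?_⟩
      rw [← hee, ← hj2]
      exact sub2 hF σ' τ' k
    have hne : (σ (j2 hF σ τ k) : Finset (Fin w)) ≠ (σ (j1 hF σ τ k) : Finset (Fin w)) :=
      fun h => hne12 (σ.injective (Subtype.ext h)).symm
    have hne' : (σ' (j2 hF σ τ k) : Finset (Fin w)) ≠ (σ (j1 hF σ τ k) : Finset (Fin w)) := by
      rw [h1]
      intro h
      exact hne12 (σ'.injective (Subtype.ext h)).symm
    exact Subtype.ext (two_elt_eq hF hS hm2 hm2' hm1 hne hne')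
  · intro h2
    have hee : (τ' k : Finset (Fin w)) = (τ k : Finset (Fin w)) := by
      rw [edge_eq2 hF σ' τ' k, edge_eq2 hF σ τ k, hj2, ha2, cj_congr hF σ σ' h2]
    have hS : (F.filter (fun t => (τ k : Finset (Fin w)) ⊆ t)).card = 2 :=
      hF.2.2.1 _ (edge_card2 (τ k).2) ⟨σ (j1 hF σ τ k), (σ _).2, sub1 hF σ τ k⟩
    have hm1 : (σ (j1 hF σ τ k) : Finset (Fin w)) ∈ F.filter (fun t => (τ k : Finset (Fin w)) ⊆ t) :=
      Finset.mem_filter.mpr ⟨(σ _).2, sub1 hF σ τ k⟩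
    have hm2 : (σ (j2 hF σ τ k) : Finset (Fin w)) ∈ F.filter (fun t => (τ k : Finset (Fin w)) ⊆ t) :=
      Finset.mem_filter.mpr ⟨(σ _).2, sub2 hF σ τ k⟩
    have hm1' : (σ' (j1 hF σ τ k) : Finset (Fin w)) ∈ F.filter (fun t => (τ k : Finset (Fin w)) ⊆ t) := by
      refine Finset.mem_filter.mpr ⟨(σ' _).2, ?_⟩
      rw [← hee, ← hj1]
      exact sub1 hF σ' τ' k
    have hne : (σ (j1 hF σ τ k) : Finset (Fin w)) ≠ (σ (j2 hF σ τ k) : Finset (Fin w)) :=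
      fun h => hne12 (σ.injective (Subtype.ext h))
    have hne' : (σ' (j1 hF σ τ k) : Finset (Fin w)) ≠ (σ (j2 hF σ τ k) : Finset (Fin w)) := by
      rw [h2]
      intro h
      exact hne12 (σ'.injective (Subtype.ext h))
    exact Subtype.ext (two_elt_eq hF hS hm1 hm1' hm2 hne hne')

lemma sigma_eq (hf : 0 < f) (h0 : σ ⟨0, hf⟩ = σ' ⟨0, hf⟩)
    (hg : gfun hF σ τ = gfun hF σ' τ') : ∀ j, σ j = σ' j := by
  have key : ∀ (t : Finset (Fin w)),
      Relation.ReflTransGen (fun s s' => s ∈ F ∧ s' ∈ F ∧ (s ∩ s').card = 2)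
        ((σ ⟨0, hf⟩ : Finset (Fin w))) t →
      ∀ ht : t ∈ F, σ (σ.symm ⟨t, ht⟩) = σ' (σ.symm ⟨t, ht⟩) := by
    intro t hch
    induction hch with
    | refl =>
      intro ht
      have he : (⟨(σ ⟨0, hf⟩ : Finset (Fin w)), ht⟩ : {t // t ∈ F}) = σ ⟨0, hf⟩ :=
        Subtype.ext rfl
      rw [he, Equiv.symm_apply_apply]
      exact h0
    | @tail b c hab hbc ih =>
      intro ht
      obtain ⟨hbF, hcF, hcard2⟩ := hbc
      have he : b ∩ c ∈ edges F := mem_edges.mpr ⟨b, hbF, Finset.inter_subset_left, hcard2⟩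
      set k := τ.symm ⟨b ∩ c, he⟩ with hk
      have hτk : (τ k : Finset (Fin w)) = b ∩ c := by rw [hk, Equiv.apply_symm_apply]
      have hjb : (σ (σ.symm ⟨b, hbF⟩) : Finset (Fin w)) = b := by rw [Equiv.apply_symm_apply]
      have hjc : (σ (σ.symm ⟨c, ht⟩) : Finset (Fin w)) = c := by rw [Equiv.apply_symm_apply]
      have hb_tri : σ.symm ⟨b, hbF⟩ ∈ tri σ ((τ k : Finset (Fin w))) := by
        rw [mem_tri hF σ, hτk, hjb]; exact Finset.inter_subset_left
      have hc_tri : σ.symm ⟨c, ht⟩ ∈ tri σ ((τ k : Finset (Fin w))) := by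
        rw [mem_tri hF σ, hτk, hjc]; exact Finset.inter_subset_right
      have hbc_ne : σ.symm ⟨b, hbF⟩ ≠ σ.symm ⟨c, ht⟩ := by
        intro h
        have hsub : (⟨b, hbF⟩ : {t // t ∈ F}) = ⟨c, ht⟩ := by
          rw [← Equiv.apply_symm_apply σ ⟨b, hbF⟩, ← Equiv.apply_symm_apply σ ⟨c, ht⟩, h]
        have hbceq : b = c := congrArg Subtype.val hsub
        rw [hbceq, Finset.inter_self] at hcard2
        have := hF.2.1 c hcF
        omega
      have hPb : σ (σ.symm ⟨b, hbF⟩) = σ' (σ.symm ⟨b, hbF⟩) := ih hbF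
      rw [tri_eq hF σ τ k] at hb_tri hc_tri
      simp only [mem_insert, mem_singleton] at hb_tri hc_tri
      rcases hb_tri with hb1 | hb2 <;> rcases hc_tri with hc1 | hc2
      · exact absurd (hb1.trans hc1.symm) hbc_ne
      · rw [hc2]
        rw [hb1] at hPb
        exact (sigma_step hF σ σ' τ τ' hg k).1 hPb
      · rw [hc1]
        rw [hb2] at hPb
        exact (sigma_step hF σ σ' τ τ' hg k).2 hPb
      · exact absurd (hb2.trans hc2.symm) hbc_ne
  intro j
  have hch := hF.2.2.2.2.2 _ (σ ⟨0, hf⟩).2 _ (σ j).2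
  have := key _ hch (σ j).2
  have he : (⟨(σ j : Finset (Fin w)), (σ j).2⟩ : {t // t ∈ F}) = σ j := Subtype.ext rfl
  rw [he, Equiv.symm_apply_apply] at this
  exact this

lemma tau_eq (hσ : σ = σ') (hg : gfun hF σ τ = gfun hF σ' τ') : τ = τ' := by
  subst hσ
  apply Equiv.ext
  intro k
  obtain ⟨hj1, ha1, _, _⟩ := gfun_comp_eq hF σ σ τ τ' hg k
  apply Subtype.ext
  rw [edge_eq1 hF σ τ k, edge_eq1 hF σ τ' k, hj1, ha1]

end Main4
end Overc

namespace Overc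
open Finset

section Main5

variable {w f : ℕ} {F : Finset (Finset (Fin w))}

/-- Extension of a pinned bijection. -/
def extEquiv (hf : 0 < f) (t₀ : {t // t ∈ F})
    (π : {i : Fin f // i ≠ ⟨0, hf⟩} ≃ {t : {t // t ∈ F} // t ≠ t₀}) :
    Fin f ≃ {t // t ∈ F} where
  toFun i := if h : i = ⟨0, hf⟩ then t₀ else (π ⟨i, h⟩ : {t // t ∈ F})
  invFun t := if h : t = t₀ then ⟨0, hf⟩ else (π.symm ⟨t, h⟩ : Fin f)
  left_inv i := by
    dsimp only
    by_cases h : i = ⟨0, hf⟩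
    · rw [dif_pos h, dif_pos rfl, h]
    · rw [dif_neg h, dif_neg (π ⟨i, h⟩).2]
      have : (⟨((π ⟨i, h⟩ : {t : {t // t ∈ F} // t ≠ t₀}) : {t // t ∈ F}), (π ⟨i, h⟩).2⟩ :
          {t : {t // t ∈ F} // t ≠ t₀}) = π ⟨i, h⟩ := Subtype.ext rfl
      rw [this, Equiv.symm_apply_apply]
  right_inv t := by
    dsimp only
    by_cases h : t = t₀
    · rw [dif_pos h, dif_pos rfl, h]
    · rw [dif_neg h, dif_neg (π.symm ⟨t, h⟩).2]
      have : (⟨((π.symm ⟨t, h⟩ : {i : Fin f // i ≠ ⟨0, hf⟩}) : Fin f), (π.symm ⟨t, h⟩).2⟩ :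
          {i : Fin f // i ≠ ⟨0, hf⟩}) = π.symm ⟨t, h⟩ := Subtype.ext rfl
      rw [this, Equiv.apply_symm_apply]

lemma extEquiv_zero (hf : 0 < f) (t₀ : {t // t ∈ F})
    (π : {i : Fin f // i ≠ ⟨0, hf⟩} ≃ {t : {t // t ∈ F} // t ≠ t₀}) :
    extEquiv hf t₀ π ⟨0, hf⟩ = t₀ := by
  simp [extEquiv]

lemma extEquiv_ne (hf : 0 < f) (t₀ : {t // t ∈ F})
    (π : {i : Fin f // i ≠ ⟨0, hf⟩} ≃ {t : {t // t ∈ F} // t ≠ t₀})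
    {i : Fin f} (h : i ≠ ⟨0, hf⟩) :
    extEquiv hf t₀ π i = (π ⟨i, h⟩ : {t // t ∈ F}) := by
  simp only [extEquiv, Equiv.coe_fn_mk]
  exact dif_neg h

/-- The parameter space. -/
def Data (hf : 0 < f) (F : Finset (Finset (Fin w))) (t₀ : {t // t ∈ F}) : Type _ :=
  ({i : Fin f // i ≠ ⟨0, hf⟩} ≃ {t : {t // t ∈ F} // t ≠ t₀}) ×
    (Fin (3 * f / 2) ≃ {e // e ∈ edges F})

noncomputable def dataMap (hF : IsClosedSurface F) (hf : 0 < f) (t₀ : {t // t ∈ F})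
    (p : Data hf F t₀) : {g : GluingStory f // IsoToSurface g F} :=
  ⟨story hF (extEquiv hf t₀ p.1) p.2, story_iso hF (extEquiv hf t₀ p.1) p.2⟩

lemma dataMap_inj (hF : IsClosedSurface F) (hf : 0 < f) (t₀ : {t // t ∈ F}) :
    Function.Injective (dataMap hF hf t₀) := by
  intro p q h
  have hg : gfun hF (extEquiv hf t₀ p.1) p.2 = gfun hF (extEquiv hf t₀ q.1) q.2 :=
    congrArg (fun z => z.1.1) h
  have h0 : extEquiv hf t₀ p.1 ⟨0, hf⟩ = extEquiv hf t₀ q.1 ⟨0, hf⟩ := by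
    rw [extEquiv_zero, extEquiv_zero]
  have hσ := sigma_eq hF (extEquiv hf t₀ p.1) (extEquiv hf t₀ q.1) p.2 q.2 hf h0 hg
  have hσe : extEquiv hf t₀ p.1 = extEquiv hf t₀ q.1 := Equiv.ext hσ
  have hπ : p.1 = q.1 := by
    apply Equiv.ext
    intro x
    apply Subtype.ext
    have h1 := hσ x.1
    rw [extEquiv_ne hf t₀ p.1 x.2, extEquiv_ne hf t₀ q.1 x.2] at h1
    have hx : (⟨x.1, x.2⟩ : {i : Fin f // i ≠ ⟨0, hf⟩}) = x := Subtype.ext rfl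
    rw [hx] at h1
    exact h1
  have hτ : p.2 = q.2 := tau_eq hF (extEquiv hf t₀ p.1) (extEquiv hf t₀ q.1) p.2 q.2 hσe hg
  exact Prod.ext hπ hτ

/-- Edge count. -/
lemma card_edges (hF : IsClosedSurface F) {f : ℕ} (hcard : F.card = f) :
    (edges F).card = 3 * f / 2 ∧ 2 * (edges F).card = 3 * f := by
  have hdouble : ∑ e ∈ edges F, (F.filter (fun t => e ⊆ t)).card
      = ∑ t ∈ F, ((edges F).filter (fun e => e ⊆ t)).card := by
    simp only [Finset.card_filter]
    rw [Finset.sum_comm]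
  have hleft : ∑ e ∈ edges F, (F.filter (fun t => e ⊆ t)).card = 2 * (edges F).card := by
    rw [Finset.sum_congr rfl (fun e he => ?_), Finset.sum_const, smul_eq_mul, mul_comm]
    obtain ⟨t, htF, hsub, hc2⟩ := mem_edges.mp he
    exact hF.2.2.1 e hc2 ⟨t, htF, hsub⟩
  have hterm : ∀ t ∈ F, ((edges F).filter (fun e => e ⊆ t)).card = 3 := by
    intro t ht
    have hfilt : (edges F).filter (fun e => e ⊆ t) = t.powersetCard 2 := by
      ext e
      rw [Finset.mem_filter, Finset.mem_powersetCard, mem_edges]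
      constructor
      · rintro ⟨⟨t', _, _, hc2⟩, hsub⟩
        exact ⟨hsub, hc2⟩
      · rintro ⟨hsub, hc2⟩
        exact ⟨⟨t, ht, hsub, hc2⟩, hsub⟩
    rw [hfilt, Finset.card_powersetCard, hF.2.1 t ht]
    decide
  have hright : ∑ t ∈ F, ((edges F).filter (fun e => e ⊆ t)).card = 3 * f := by
    rw [Finset.sum_congr rfl hterm, Finset.sum_const, smul_eq_mul, hcard, mul_comm]
  have h23 : 2 * (edges F).card = 3 * f := by rw [← hleft, hdouble, hright]
  exact ⟨by omega, h23⟩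

lemma card_data (hF : IsClosedSurface F) (hf : 0 < f) (hcard : F.card = f)
    (t₀ : {t // t ∈ F}) :
    Nat.card (Data hf F t₀) = (f - 1).factorial * (3 * f / 2).factorial := by
  have hcF : Fintype.card {t // t ∈ F} = f := by rw [Fintype.card_coe, hcard]
  have hc1 : Fintype.card {i : Fin f // i ≠ ⟨0, hf⟩} = f - 1 := by
    rw [Fintype.card_subtype_compl (fun i => i = (⟨0, hf⟩ : Fin f)),
      Fintype.card_subtype_eq, Fintype.card_fin]
  have hc2 : Fintype.card {t : {t // t ∈ F} // t ≠ t₀} = f - 1 := by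
    rw [Fintype.card_subtype_compl (fun t => t = t₀), Fintype.card_subtype_eq, hcF]
  have hcE : Fintype.card {e // e ∈ edges F} = 3 * f / 2 := by
    rw [Fintype.card_coe, (card_edges hF hcard).1]
  rw [Data, Nat.card_eq_fintype_card, Fintype.card_prod,
    Fintype.card_equiv (Fintype.equivOfCardEq (hc1.trans hc2.symm)),
    Fintype.card_equiv (Fintype.equivOfCardEq (by rw [Fintype.card_fin, hcE])),
    hc1, Fintype.card_fin]

end Main5
end Overc

namespace Overc

lemma pow_self_le (n : ℕ) : (n : ℝ) ^ n ≤ Real.exp 1 ^ n * n.factorial := by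
  induction n with
  | zero => norm_num
  | succ n ih =>
    rcases Nat.eq_zero_or_pos n with rfl | hn
    · have h2 : (1:ℝ) ≤ Real.exp 1 := by nlinarith [Real.add_one_le_exp 1]
      norm_num [Nat.factorial]
    · have hn' : (0:ℝ) < n := by exact_mod_cast hn
      have hexp : ((n:ℝ) + 1) ≤ n * Real.exp (1 / n) := by
        have h := Real.add_one_le_exp (1 / (n:ℝ))
        have hmul := mul_le_mul_of_nonneg_left h (le_of_lt hn')
        have hcancel : (n:ℝ) * (1 / n) = 1 := by field_simp
        nlinarith [hmul, hcancel]
      have hstep : ((n:ℝ) + 1) ^ n ≤ Real.exp 1 * (n:ℝ) ^ n := by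
        calc ((n:ℝ)+1)^n ≤ ((n:ℝ) * Real.exp (1/n))^n := by
              apply pow_le_pow_left₀ (by positivity) hexp
          _ = (n:ℝ)^n * Real.exp (1/n)^n := mul_pow _ _ _
          _ = (n:ℝ)^n * Real.exp ((n:ℕ) * (1/(n:ℝ))) := by rw [Real.exp_nat_mul]
          _ = (n:ℝ)^n * Real.exp 1 := by rw [mul_one_div, div_self (ne_of_gt hn')]
          _ = Real.exp 1 * (n:ℝ)^n := mul_comm _ _
      have hpos : (0:ℝ) ≤ (n:ℝ) + 1 := by positivity
      have hmain : ((n:ℝ)+1)^(n+1) ≤ Real.exp 1 ^ (n+1) * (((n:ℝ)+1) * n.factorial) := by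
        calc ((n:ℝ)+1)^(n+1) = ((n:ℝ)+1) * ((n:ℝ)+1)^n := by ring
          _ ≤ ((n:ℝ)+1) * (Real.exp 1 * (n:ℝ)^n) := mul_le_mul_of_nonneg_left hstep hpos
          _ ≤ ((n:ℝ)+1) * (Real.exp 1 * (Real.exp 1^n * n.factorial)) := by
              apply mul_le_mul_of_nonneg_left _ hpos
              exact mul_le_mul_of_nonneg_left ih (le_of_lt (Real.exp_pos 1))
          _ = Real.exp 1^(n+1) * (((n:ℝ)+1) * n.factorial) := by ring
      push_cast [Nat.factorial_succ]
      push_cast at hmain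
      linarith

lemma numeric (f m : ℕ) (hm : 1 ≤ m) (hf2 : f = 2 * m) :
    (f:ℝ) ^ (5 * m) ≤ 32 ^ f * ((f - 1).factorial * (3 * m).factorial) := by
  have h1 : (f:ℝ)^(5*m) = (f:ℝ)^f * (f:ℝ)^(3*m) := by
    rw [← pow_add]
    congr 1
    omega
  have h2 : (f:ℝ)^f ≤ Real.exp 1 ^ f * (f.factorial) := pow_self_le f
  have h3 : (f:ℝ)^(3*m) ≤ ((3*m : ℕ):ℝ)^(3*m) := by
    apply pow_le_pow_left₀ (by positivity)
    exact_mod_cast (by omega : f ≤ 3*m)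
  have h4 : ((3*m:ℕ):ℝ)^(3*m) ≤ Real.exp 1 ^ (3*m) * ((3*m).factorial) := pow_self_le (3*m)
  have hfact : (f.factorial : ℝ) = f * (f-1).factorial := by
    rw [← Nat.mul_factorial_pred (by omega : f ≠ 0)]
    push_cast
    ring
  have hexp5 : Real.exp 1 ^ f * Real.exp 1 ^ (3*m) = (Real.exp 1 ^ 5) ^ m := by
    rw [← pow_add, ← pow_mul]
    congr 1
    omega
  have he5 : Real.exp 1 ^ 5 ≤ 149 := by
    have h := Real.exp_one_lt_d9
    have hp : Real.exp 1 ^ 5 ≤ (2.7182818286 : ℝ)^5 :=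
      pow_le_pow_left₀ (le_of_lt (Real.exp_pos 1)) (le_of_lt h) 5
    nlinarith [hp]
  have hf4 : (f:ℝ) ≤ 4 ^ m := by
    have hlt : f < 2^(2*m) := hf2 ▸ Nat.lt_two_pow_self (n := 2*m)
    have : (f:ℝ) < ((2:ℕ):ℝ)^(2*m) := by exact_mod_cast hlt
    calc (f:ℝ) ≤ ((2:ℕ):ℝ)^(2*m) := le_of_lt this
      _ = 4 ^ m := by rw [pow_mul]; norm_num
  have key2 : Real.exp 1 ^ f * Real.exp 1 ^ (3*m) * f ≤ 32 ^ f := by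
    rw [hexp5]
    calc (Real.exp 1 ^5)^m * (f:ℝ) ≤ 149^m * 4^m := by
          apply mul_le_mul (pow_le_pow_left₀ (by positivity) he5 m) hf4 (by positivity)
            (by positivity)
      _ = 596^m := by rw [← mul_pow]; norm_num
      _ ≤ 1024^m := pow_le_pow_left₀ (by norm_num) (by norm_num) m
      _ = 32 ^ f := by rw [hf2, pow_mul]; norm_num
  calc (f:ℝ)^(5*m) = (f:ℝ)^f * (f:ℝ)^(3*m) := h1
    _ ≤ (Real.exp 1 ^ f * f.factorial) * (Real.exp 1 ^ (3*m) * (3*m).factorial) := by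
        apply mul_le_mul h2 (h3.trans h4) (by positivity) (by positivity)
    _ = (Real.exp 1 ^ f * Real.exp 1 ^ (3*m) * f) * ((f-1).factorial * (3*m).factorial) := by
        rw [hfact]; ring
    _ ≤ 32^f * ((f-1).factorial * (3*m).factorial) := by
        apply mul_le_mul_of_nonneg_right key2 (by positivity)

end Overc


/-- **Lemma (overcounting).** There is a constant `C > 0` such that for every even
positive integer `f` and every connected triangulated closed surface `X` with `f`
faces, at least `C⁻ᶠ · f^(5f/2)` gluing stories `g ∈ GS(f)` have quotient complex
`X(g)` simplicially isomorphic to `X`. -/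
theorem gluingStory_overcount :
    ∃ C : ℝ, 0 < C ∧ ∀ f : ℕ, 0 < f → Even f → ∀ w : ℕ,
      ∀ F : Finset (Finset (Fin w)), IsClosedSurface F → F.card = f →
      C⁻¹ ^ f * (f : ℝ) ^ ((5 * (f : ℝ)) / 2) ≤
        (Nat.card {g : GluingStory f // IsoToSurface g F} : ℝ) := by
  refine ⟨32, by norm_num, ?_⟩
  intro f hf heven w F hFs hcard
  obtain ⟨m, hmm⟩ := heven
  have hf2 : f = 2 * m := by omega
  have hm1 : 1 ≤ m := by omega
  have h32 : 3 * f / 2 = 3 * m := by omega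
  set t₀ : {t // t ∈ F} := ⟨hFs.1.choose, hFs.1.choose_spec⟩
  haveI : Finite (GluingStory f) := Subtype.finite
  haveI : Finite {g : GluingStory f // IsoToSurface g F} := Subtype.finite
  have hle : (f-1).factorial * (3*f/2).factorial ≤
      Nat.card {g : GluingStory f // IsoToSurface g F} := by
    rw [← Overc.card_data hFs hf hcard t₀]
    exact Nat.card_le_card_of_injective _ (Overc.dataMap_inj hFs hf t₀)
  rw [h32] at hle
  have hexp : (5 * (f:ℝ)) / 2 = ((5 * m : ℕ) : ℝ) := by
    rw [hf2]; push_cast; ring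
  rw [hexp, Real.rpow_natCast]
  have hnum := Overc.numeric f m hm1 hf2
  have hcast : (((f-1).factorial * (3*m).factorial : ℕ) : ℝ) ≤
      (Nat.card {g : GluingStory f // IsoToSurface g F} : ℝ) := Nat.cast_le.mpr hle
  have hpos : (0:ℝ) < 32 ^ f := by positivity
  rw [inv_pow, inv_mul_le_iff₀ hpos]
  calc (f:ℝ)^(5*m) ≤ 32^f * (((f-1).factorial * (3*m).factorial : ℕ) : ℝ) := by
        push_cast
        exact hnum
    _ ≤ 32^f * (Nat.card {g : GluingStory f // IsoToSurface g F} : ℝ) := by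
        apply mul_le_mul_of_nonneg_left hcast (by positivity)
end

section
/- If X is a connected triangulated closed surface with f faces, then the group of simplicial automorphisms of X has order at most 6f. -/
lemma image_symm_eq {w : ℕ} {F : Finset (Finset (Fin w))} (σ : Equiv.Perm (Fin w))
    (h : F.image (fun t => t.image σ) = F) :
    F.image (fun t => t.image σ.symm) = F := by
  conv_lhs => rw [← h]
  rw [Finset.image_image]
  simp [Function.comp_def, Finset.image_image]

lemma rigid {w : ℕ} {F : Finset (Finset (Fin w))} (hF : IsClosedSurface F)
    (σ : Equiv.Perm (Fin w)) (hσ : F.image (fun t => t.image σ) = F)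
    {t₀ : Finset (Fin w)} (ht₀ : t₀ ∈ F) (hfix : ∀ v ∈ t₀, σ v = v) :
    σ = 1 := by
  obtain ⟨-, hcard, hedge, hcover, -, hconn⟩ := hF
  have step : ∀ b c : Finset (Fin w), b ∈ F → c ∈ F → (b ∩ c).card = 2 →
      (∀ v ∈ b, σ v = v) → ∀ v ∈ c, σ v = v := by
    intro b c hb hc hbc hbfix
    have hne : b ≠ c := by
      intro h; rw [h, Finset.inter_self, hcard c hc] at hbc; omega
    have himg : c.image σ ∈ F := by
      rw [← hσ]; exact Finset.mem_image_of_mem _ hc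
    have hesub : b ∩ c ⊆ c.image σ := by
      intro v hv
      have hvb := Finset.mem_of_mem_inter_left hv
      have hvc := Finset.mem_of_mem_inter_right hv
      have heq := hbfix v hvb
      exact heq ▸ Finset.mem_image_of_mem σ hvc
    have hfilter := hedge (b ∩ c) hbc ⟨b, hb, Finset.inter_subset_left⟩
    have hbmem : b ∈ F.filter (fun t => b ∩ c ⊆ t) :=
      Finset.mem_filter.mpr ⟨hb, Finset.inter_subset_left⟩
    have hcmem : c ∈ F.filter (fun t => b ∩ c ⊆ t) :=
      Finset.mem_filter.mpr ⟨hc, Finset.inter_subset_right⟩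
    have himgmem : c.image σ ∈ F.filter (fun t => b ∩ c ⊆ t) :=
      Finset.mem_filter.mpr ⟨himg, hesub⟩
    have hpair : F.filter (fun t => b ∩ c ⊆ t) = {b, c} := by
      symm
      apply Finset.eq_of_subset_of_card_le
      · intro x hx
        rcases Finset.mem_insert.mp hx with h | h
        · exact h ▸ hbmem
        · exact (Finset.mem_singleton.mp h) ▸ hcmem
      · rw [hfilter, Finset.card_insert_of_notMem (by simp [hne]), Finset.card_singleton]
    rw [hpair, Finset.mem_insert, Finset.mem_singleton] at himgmem
    have heq : c.image σ = c := by
      rcases himgmem with h | h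
      · exfalso
        have hbimg : b.image σ = b := by
          rw [Finset.image_congr (g := id) (fun v hv => hbfix v hv), Finset.image_id]
        exact hne (Finset.image_injective σ.injective (h.trans hbimg.symm)).symm
      · exact h
    intro v hv
    by_cases hve : v ∈ b
    · exact hbfix v hve
    · have hσv : σ v ∈ c := heq ▸ Finset.mem_image_of_mem σ hv
      have hσvne : σ v ∉ b ∩ c := by
        intro hmem
        have h1 := hbfix (σ v) (Finset.mem_of_mem_inter_left hmem)
        have hveq : σ v = v := σ.injective h1
        exact hve (hveq ▸ Finset.mem_of_mem_inter_left hmem)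
      have hdiff : (c \ (b ∩ c)).card = 1 := by
        rw [Finset.card_sdiff_of_subset (Finset.inter_subset_right), hcard c hc, hbc]
      have hvdiff : v ∈ c \ (b ∩ c) :=
        Finset.mem_sdiff.mpr ⟨hv, fun h => hve (Finset.mem_of_mem_inter_left h)⟩
      have hσvdiff : σ v ∈ c \ (b ∩ c) := Finset.mem_sdiff.mpr ⟨hσv, hσvne⟩
      obtain ⟨x, hx⟩ := Finset.card_eq_one.mp hdiff
      rw [hx, Finset.mem_singleton] at hvdiff hσvdiff
      rw [hσvdiff, hvdiff]
  have key : ∀ s, Relation.ReflTransGen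
      (fun u u' => u ∈ F ∧ u' ∈ F ∧ (u ∩ u').card = 2) t₀ s →
      ∀ v ∈ s, σ v = v := by
    intro s hs
    induction hs with
    | refl => exact hfix
    | tail _ hstep ih => exact step _ _ hstep.1 hstep.2.1 hstep.2.2 ih
  refine Equiv.ext fun v => ?_
  obtain ⟨t, ht, hvt⟩ := hcover v
  simpa using key t (hconn t₀ ht₀ t ht) v hvt

/-- **Lemma (automorphism bound).**
If `X` is a connected triangulated closed surface with `f` faces, then the group of
simplicial automorphisms of `X` (bijections of the vertex set mapping faces
bijectively onto faces) has order at most `6f`. -/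
theorem card_aut_le (w f : ℕ) (F : Finset (Finset (Fin w)))
    (hF : IsClosedSurface F) (hf : F.card = f) :
    Nat.card {σ : Equiv.Perm (Fin w) // F.image (fun t => t.image σ) = F} ≤ 6 * f := by
  classical
  obtain ⟨t₀, ht₀⟩ := hF.1
  have h3 : t₀.card = 3 := hF.2.1 t₀ ht₀
  obtain ⟨a, b, c, hab, hac, hbc, ht⟩ := Finset.card_eq_three.mp h3
  have ha : a ∈ t₀ := by simp [ht]
  have hb : b ∈ t₀ := by simp [ht]
  have hc : c ∈ t₀ := by simp [ht]
  set T : Finset ((_ : Finset (Fin w)) × (Fin w × Fin w)) :=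
    F.sigma (fun s => s.offDiag) with hT
  have hTcard : T.card = 6 * f := by
    rw [hT, Finset.card_sigma, ← hf,
      Finset.sum_congr rfl (fun s hs => by rw [Finset.offDiag_card, hF.2.1 s hs])]
    simp [mul_comm]
  have hmem : ∀ σ : {σ : Equiv.Perm (Fin w) // F.image (fun t => t.image σ) = F},
      (⟨t₀.image σ.1, (σ.1 a, σ.1 b)⟩ : (_ : Finset (Fin w)) × (Fin w × Fin w)) ∈ T := by
    intro σ
    refine Finset.mem_sigma.mpr ⟨?_, Finset.mem_offDiag.mpr ⟨?_, ?_, ?_⟩⟩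
    · show t₀.image σ.1 ∈ F
      have h0 := Finset.mem_image_of_mem (fun t : Finset (Fin w) => t.image σ.1) ht₀
      rwa [σ.2] at h0
    · exact Finset.mem_image_of_mem _ ha
    · exact Finset.mem_image_of_mem _ hb
    · exact fun h => hab (σ.1.injective h)
  have hinj : Function.Injective
      (fun σ : {σ : Equiv.Perm (Fin w) // F.image (fun t => t.image σ) = F} =>
        (⟨⟨t₀.image σ.1, (σ.1 a, σ.1 b)⟩, hmem σ⟩ : ↥T)) := by
    intro σ τ h
    simp only [Subtype.mk_eq_mk, Sigma.mk.inj_iff] at h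
    obtain ⟨himg, hpq⟩ := h
    have hpq' : (σ.1 a, σ.1 b) = (τ.1 a, τ.1 b) := eq_of_heq hpq
    have haa : σ.1 a = τ.1 a := (Prod.ext_iff.mp hpq').1
    have hbb : σ.1 b = τ.1 b := (Prod.ext_iff.mp hpq').2
    have hcc : σ.1 c = τ.1 c := by
      have h1 : σ.1 c ∈ t₀.image τ.1 := himg ▸ Finset.mem_image_of_mem _ hc
      rw [ht] at h1
      simp only [Finset.image_insert, Finset.image_singleton, Finset.mem_insert,
        Finset.mem_singleton] at h1
      rcases h1 with h1 | h1 | h1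
      · exact absurd (σ.1.injective (h1.trans haa.symm)) (Ne.symm hac)
      · exact absurd (σ.1.injective (h1.trans hbb.symm)) (Ne.symm hbc)
      · exact h1
    -- π = τ⁻¹ ∘ σ fixes t₀ pointwise and preserves F
    set π : Equiv.Perm (Fin w) := σ.1.trans τ.1.symm with hπ
    have hπF : F.image (fun t => t.image π) = F := by
      have e1 : (fun t : Finset (Fin w) => t.image π)
          = (fun t : Finset (Fin w) => t.image τ.1.symm) ∘ (fun t => t.image σ.1) := by
        funext t
        simp [hπ, Finset.image_image, Function.comp_def]
      rw [e1, ← Finset.image_image, σ.2, image_symm_eq τ.1 τ.2]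
    have hπfix : ∀ v ∈ t₀, π v = v := by
      intro v hv
      rw [ht] at hv
      simp only [Finset.mem_insert, Finset.mem_singleton] at hv
      rcases hv with rfl | rfl | rfl
      · simp [hπ, haa]
      · simp [hπ, hbb]
      · simp [hπ, hcc]
    have hπ1 : π = 1 := rigid ⟨⟨t₀, ht₀⟩, hF.2⟩ π hπF ht₀ hπfix
    have : σ.1 = τ.1 := by
      refine Equiv.ext fun x => ?_
      have := congrArg (fun e : Equiv.Perm (Fin w) => e x) hπ1
      simp only [hπ, Equiv.trans_apply, Equiv.Perm.one_apply] at this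
      exact τ.1.symm_apply_eq.mp this ▸ rfl
    exact Subtype.ext this
  rw [Nat.card_eq_fintype_card]
  calc Fintype.card {σ : Equiv.Perm (Fin w) // F.image (fun t => t.image σ) = F}
      ≤ Fintype.card ↥T := Fintype.card_le_of_injective _ hinj
    _ = T.card := Fintype.card_coe T
    _ = 6 * f := hTcard
end

section
/- In a 2-dimensional simplicial complex on n vertices, every inclusion-minimal Z/2 2-cycle has at most n²/2 faces. -/
private lemma card_attach_filter {α : Type} [DecidableEq α] (s : Finset α) (p : α → Prop)
    [DecidablePred p] : (s.attach.filter (fun t => p t.1)).card = (s.filter p).card := by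
  rw [Finset.filter_attach, Finset.card_map, Finset.card_attach]

/-- **Lemma (minimal cycles are small).**
In a 2-dimensional simplicial complex on `n` vertices, every inclusion-minimal `Z/2`
2-cycle has at most `n²/2` faces. -/
theorem minCycle_card_le (n : ℕ) (F : Finset (Finset (Fin n)))
    (hF : ∀ t ∈ F, t.card = 3) (Z : Finset (Finset (Fin n))) (hZF : Z ⊆ F)
    (hZ : IsMinCycle Z) : (Z.card : ℝ) ≤ (n : ℝ) ^ 2 / 2 := by
  obtain ⟨⟨hcard3, heven⟩, hne, hmin⟩ := hZ
  obtain ⟨t0, ht0⟩ := hne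
  have hn3 : 3 ≤ n := by
    have h3 := hcard3 t0 ht0
    have := Finset.card_le_card (Finset.subset_univ t0)
    simpa [h3] using this
  haveI : Nonempty {t // t ∈ Z} := ⟨⟨t0, ht0⟩⟩
  set K := ZMod 2 with hK
  -- the boundary matrix
  set M : Matrix {e : Finset (Fin n) // e.card = 2} {t // t ∈ Z} K :=
    fun e t => if e.1 ⊆ t.1 then 1 else 0 with hM
  set f := M.mulVecLin with hf
  have h01 : ∀ z : K, z = 0 ∨ z = 1 := by decide
  -- the basic sum computation
  have hsum : ∀ (x : {t // t ∈ Z} → K) (e : Finset (Fin n)),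
      (∑ t : {t // t ∈ Z}, (if e ⊆ t.1 then 1 else 0) * x t)
        = (((Z.attach.filter (fun t => e ⊆ t.1 ∧ x t = 1)).card : K)) := by
    intro x e
    rw [← Finset.sum_boole, Finset.univ_eq_attach]
    apply Finset.sum_congr rfl
    intro t _
    rcases h01 (x t) with h | h <;> by_cases he : e ⊆ t.1 <;> simp [he, h]
  have hfapp : ∀ (x : {t // t ∈ Z} → K) (e : {e : Finset (Fin n) // e.card = 2}),
      f x e = ∑ t : {t // t ∈ Z}, (if e.1 ⊆ t.1 then 1 else 0) * x t := by
    intro x e; rfl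
  -- all-ones vector is in the kernel
  have hone : (fun _ => 1 : {t // t ∈ Z} → K) ∈ LinearMap.ker f := by
    rw [LinearMap.mem_ker]
    funext e
    rw [Pi.zero_apply, hfapp, hsum]
    have hcardeq : (Z.attach.filter (fun t => e.1 ⊆ t.1 ∧ (1:K) = 1)).card
        = (Z.filter (fun t => e.1 ⊆ t)).card := by
      simp only [and_true]
      exact card_attach_filter Z (fun t => e.1 ⊆ t)
    rw [hcardeq, ZMod.natCast_eq_zero_iff]
    exact (heven e.1 e.2).two_dvd
  -- kernel is exactly the span of the all-ones vector
  have hker : LinearMap.ker f = Submodule.span K {(fun _ => 1 : {t // t ∈ Z} → K)} := by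
    apply le_antisymm
    · intro x hx
      rcases eq_or_ne x 0 with h0 | h0
      · simp [h0]
      -- x is nonzero; its support is a nonempty subcycle, hence all of Z
      have hx' : ∀ e : Finset (Fin n), e.card = 2 →
          Even ((Z.attach.filter (fun t => e ⊆ t.1 ∧ x t = 1)).card) := by
        intro e he
        have := congrFun (LinearMap.mem_ker.mp hx) ⟨e, he⟩
        rw [Pi.zero_apply, hfapp, hsum] at this
        rw [even_iff_two_dvd, ← ZMod.natCast_eq_zero_iff]
        simpa using this
      set Z' : Finset (Finset (Fin n)) :=
        (Z.attach.filter (fun t => x t = 1)).image Subtype.val with hZ'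
      have hZ'sub : Z' ⊆ Z := by
        intro s hs
        rw [hZ', Finset.mem_image] at hs
        obtain ⟨t, _, rfl⟩ := hs
        exact t.2
      have hZ'card : ∀ e : Finset (Fin n),
          (Z'.filter (fun s => e ⊆ s)).card
            = (Z.attach.filter (fun t => e ⊆ t.1 ∧ x t = 1)).card := by
        intro e
        refine (Finset.card_bij (fun t _ => t.1) ?_ ?_ ?_).symm
        · intro t ht
          rw [Finset.mem_filter] at ht ⊢
          refine ⟨?_, ht.2.1⟩
          rw [hZ', Finset.mem_image]
          exact ⟨t, Finset.mem_filter.mpr ⟨Finset.mem_attach _ _, ht.2.2⟩, rfl⟩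
        · intro a ha b hb hab
          exact Subtype.ext hab
        · intro s hs
          rw [Finset.mem_filter] at hs
          obtain ⟨hs1, hs2⟩ := hs
          rw [hZ', Finset.mem_image] at hs1
          obtain ⟨t, ht, rfl⟩ := hs1
          rw [Finset.mem_filter] at ht
          exact ⟨t, Finset.mem_filter.mpr ⟨Finset.mem_attach _ _, hs2, ht.2⟩, rfl⟩
      -- Z' is itself a two-cycle
      have hZ'cyc : IsTwoCycle Z' := by
        refine ⟨fun t ht => hcard3 t (hZ'sub ht), fun e he => ?_⟩
        rw [hZ'card]
        exact hx' e he
      -- Z' is nonempty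
      obtain ⟨t1, ht1⟩ : ∃ t : {t // t ∈ Z}, x t = 1 := by
        by_contra h
        push_neg at h
        apply h0
        funext t
        rcases h01 (x t) with h' | h'
        · exact h'
        · exact absurd h' (h t)
      have hZ'ne : Z'.Nonempty := by
        refine ⟨t1.1, ?_⟩
        rw [hZ', Finset.mem_image]
        exact ⟨t1, Finset.mem_filter.mpr ⟨Finset.mem_attach _ _, ht1⟩, rfl⟩
      -- by minimality, Z' = Z
      have hZ'eq : Z' = Z := by
        by_contra h
        exact hmin Z' (Finset.ssubset_iff_subset_ne.mpr ⟨hZ'sub, h⟩) hZ'ne hZ'cyc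
      -- hence x is the all-ones vector
      have hx1 : x = (fun _ => 1 : {t // t ∈ Z} → K) := by
        funext t
        have : t.1 ∈ Z' := by rw [hZ'eq]; exact t.2
        rw [hZ', Finset.mem_image] at this
        obtain ⟨t', ht', heq⟩ := this
        have ht't : t' = t := Subtype.ext heq
        subst ht't
        exact (Finset.mem_filter.mp ht').2
      rw [hx1]
      exact Submodule.mem_span_singleton_self _
    · rw [Submodule.span_singleton_le_iff_mem]
      exact hone
  -- rank-nullity
  have hone_ne : (fun _ => 1 : {t // t ∈ Z} → K) ≠ 0 := by
    intro h
    have := congrFun h (Classical.arbitrary _)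
    exact one_ne_zero this
  have hkerrank : Module.finrank K (LinearMap.ker f) = 1 := by
    rw [hker]
    exact finrank_span_singleton hone_ne
  have hdim := LinearMap.finrank_range_add_finrank_ker f
  rw [hkerrank, Module.finrank_fintype_fun_eq_card, Fintype.card_coe] at hdim
  have hrange : Module.finrank K (LinearMap.range f) ≤ n.choose 2 := by
    have h1 := Submodule.finrank_le (LinearMap.range f)
    rwa [Module.finrank_fintype_fun_eq_card, Fintype.card_finset_len, Fintype.card_fin] at h1
  have hcardle : Z.card ≤ n.choose 2 + 1 := by omega
  -- numerics
  have hR : (Z.card : ℝ) ≤ (n.choose 2 : ℝ) + 1 := by exact_mod_cast hcardle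
  rw [Nat.cast_choose_two] at hR
  have hnR : (3:ℝ) ≤ (n:ℝ) := by exact_mod_cast hn3
  nlinarith [hR, hnR]
end

section
/- Let 0 < α < 1/2, let M ≥ 4 be a fixed integer, and let p = n^{α−1}. For Y drawn from Y(n,p), let T_Y(M) denote the number of barely-dense subcomplexes of Y on at most M vertices, i.e., the number of pairs (S, F′) where S ⊆ {1,…,n} with 4 ≤ |S| ≤ M and F′ is a set of exactly 2|S| − 4 faces of Y each of which is a subset of S. Then with high probability T_Y(M) < n^{2+α/2}. -/
open scoped ENNReal

/-- The 3-element subsets of the vertex set `Fin n` (the possible faces). -/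
abbrev Tri (n : ℕ) := {t : Finset (Fin n) // t.card = 3}

/-- The probability of the event `E` under the Linial–Meshulam measure `Y(n,p)`:
a complex is a configuration `ω : Tri n → Bool` recording which faces are present
(the vertex set is `Fin n` and all edges are present), each face independently
present with probability `p`; the probability of `E` is the sum over configurations
in `E` of `∏ (p if the face is present, else 1-p)`. -/
noncomputable def lmProb (n : ℕ) (p : ℝ≥0∞) (E : Set (Tri n → Bool)) : ℝ≥0∞ :=
  ∑' ω : E, ∏ t : Tri n, (if (ω : Tri n → Bool) t then p else 1 - p)

/-- `y` is a filling of `τ` in the complex `ω`: a set of faces of `ω` such that a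
2-element subset of the vertex set is contained in an odd number of members of `y`
exactly when it is a subset of `τ`. -/
def IsFilling (n : ℕ) (ω : Tri n → Bool) (τ : Finset (Fin n))
    (y : Finset (Finset (Fin n))) : Prop :=
  (∀ t ∈ y, ∃ h : t.card = 3, ω ⟨t, h⟩ = true) ∧
  ∀ e : Finset (Fin n), e.card = 2 →
    (Odd ((y.filter (fun t => e ⊆ t)).card) ↔ e ⊆ τ)

/-- `fill n ω τ` is the filling area of `τ` in `ω`: the minimum cardinality of a
filling of `τ`, as an extended natural number (`⊤` if no filling exists). -/
noncomputable def fill (n : ℕ) (ω : Tri n → Bool) (τ : Finset (Fin n)) : ℕ∞ :=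
  ⨅ y : {y : Finset (Finset (Fin n)) // IsFilling n ω τ y},
    ((y : Finset (Finset (Fin n))).card : ℕ∞)

/-- `TY n M ω` is the number of barely-dense subcomplexes of the complex `ω` on at
most `M` vertices: pairs `(S, F')` where `S` is a vertex set with `4 ≤ |S| ≤ M` and
`F'` is a set of exactly `2|S| - 4` faces of `ω`, each a subset of `S`. -/
noncomputable def TY (n M : ℕ) (ω : Tri n → Bool) : ℕ :=
  Nat.card {P : Finset (Fin n) × Finset (Finset (Fin n)) //
    4 ≤ P.1.card ∧ P.1.card ≤ M ∧ P.2.card = 2 * P.1.card - 4 ∧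
    ∀ t ∈ P.2, (∃ h : t.card = 3, ω ⟨t, h⟩ = true) ∧ t ⊆ P.1}

/-! ### Auxiliary definitions and lemmas -/

lemma sum_prod_bool {ι : Type*} [Fintype ι] [DecidableEq ι] (c : ι → Bool → ℝ≥0∞) :
    ∑ ω : ι → Bool, ∏ t, c t (ω t) = ∏ t, (c t true + c t false) := by
  have h : ∀ t : ι, c t true + c t false = ∑ b : Bool, c t b := by
    intro t; simp [Fintype.sum_bool]
  simp_rw [h]
  rw [Finset.prod_univ_sum, Fintype.piFinset_univ]

/-- The weight of a configuration. -/
noncomputable def wt (n : ℕ) (p : ℝ≥0∞) (ω : Tri n → Bool) : ℝ≥0∞ :=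
  ∏ t : Tri n, (if ω t then p else 1 - p)

lemma marginal (n : ℕ) (p : ℝ≥0∞) (hp : p ≤ 1) (G : Finset (Tri n)) :
    ∑ ω : Tri n → Bool, (if ∀ t ∈ G, ω t = true then wt n p ω else 0)
      = p ^ G.card := by
  have key : ∀ ω : Tri n → Bool,
      (if ∀ t ∈ G, ω t = true then wt n p ω else 0)
        = ∏ t : Tri n, (if t ∈ G ∧ ω t = false then 0
            else (if ω t then p else 1 - p)) := by
    intro ω
    by_cases h : ∀ t ∈ G, ω t = true
    · rw [if_pos h, wt]
      refine Finset.prod_congr rfl fun t _ => ?_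
      by_cases ht : t ∈ G
      · simp [ht, h t ht]
      · simp [ht]
    · rw [if_neg h]
      push_neg at h
      obtain ⟨t0, ht0, hf⟩ := h
      refine (Finset.prod_eq_zero (Finset.mem_univ t0) ?_).symm
      simp [Bool.not_eq_true] at hf
      simp [hf, ht0]
  rw [Finset.sum_congr rfl fun ω _ => key ω]
  rw [sum_prod_bool (fun t b => if t ∈ G ∧ b = false then 0
            else (if b then p else 1 - p))]
  trans (∏ x : Tri n, if x ∈ G then p else (1:ℝ≥0∞))
  · exact Finset.prod_congr rfl fun t _ => by
      by_cases ht : t ∈ G <;> simp [ht, add_tsub_cancel_of_le hp]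
  · rw [Finset.prod_ite_mem, Finset.univ_inter, Finset.prod_const]

lemma total_mass (n : ℕ) (p : ℝ≥0∞) (hp : p ≤ 1) :
    ∑ ω : Tri n → Bool, wt n p ω = 1 := by
  have := marginal n p hp ∅
  simpa using this

lemma lmProb_eq (n : ℕ) (p : ℝ≥0∞) (E : Set (Tri n → Bool)) :
    lmProb n p E = ∑ ω : Tri n → Bool, E.indicator (wt n p) ω := by
  rw [lmProb, ← tsum_fintype (L := SummationFilter.unconditional _)]
  exact tsum_subtype E (wt n p)

lemma lmProb_add_compl (n : ℕ) (p : ℝ≥0∞) (hp : p ≤ 1) (E : Set (Tri n → Bool)) :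
    lmProb n p E + lmProb n p Eᶜ = 1 := by
  classical
  rw [lmProb_eq, lmProb_eq, ← Finset.sum_add_distrib]
  rw [← total_mass n p hp]
  refine Finset.sum_congr rfl fun ω _ => ?_
  by_cases h : ω ∈ E
  · rw [Set.indicator_of_mem h, Set.indicator_of_notMem (by simpa using h), add_zero]
  · rw [Set.indicator_of_notMem h, Set.indicator_of_mem (by simpa using h), zero_add]

lemma markov (n M : ℕ) (p : ℝ≥0∞) (E : Set (Tri n → Bool)) (B : ℝ≥0∞)
    (h : ∀ ω ∈ E, B ≤ (TY n M ω : ℝ≥0∞)) :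
    lmProb n p E * B ≤ ∑ ω : Tri n → Bool, wt n p ω * TY n M ω := by
  rw [lmProb_eq, Finset.sum_mul]
  refine Finset.sum_le_sum fun ω _ => ?_
  by_cases hω : ω ∈ E
  · rw [Set.indicator_of_mem hω]
    exact mul_le_mul' le_rfl (h ω hω)
  · rw [Set.indicator_of_notMem hω, zero_mul]
    exact zero_le

lemma exp_bound (n M : ℕ) (p : ℝ≥0∞) (hp : p ≤ 1) :
    ∑ ω : Tri n → Bool, wt n p ω * TY n M ω
      ≤ ∑ s ∈ Finset.Icc 4 M, (n.choose s * 2 ^ (2 ^ s) : ℝ≥0∞) * p ^ (2 * s - 4) := by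
  classical
  set cond : (Finset (Fin n) × Finset (Finset (Fin n))) → (Tri n → Bool) → Prop :=
    fun P ω => 4 ≤ P.1.card ∧ P.1.card ≤ M ∧ P.2.card = 2 * P.1.card - 4 ∧
      ∀ t ∈ P.2, (∃ h : t.card = 3, ω ⟨t, h⟩ = true) ∧ t ⊆ P.1 with hcond
  have hTY : ∀ ω, (TY n M ω : ℝ≥0∞) = ∑ P ∈ Finset.univ.filter (fun P => cond P ω), 1 := by
    intro ω
    rw [TY, Nat.card_eq_fintype_card, Fintype.card_subtype, Finset.sum_const, nsmul_eq_mul,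
      mul_one]
  have step1 : ∑ ω : Tri n → Bool, wt n p ω * TY n M ω
      = ∑ P : Finset (Fin n) × Finset (Finset (Fin n)),
          ∑ ω : Tri n → Bool, (if cond P ω then wt n p ω else 0) := by
    rw [Finset.sum_comm]
    refine Finset.sum_congr rfl fun ω _ => ?_
    rw [hTY, Finset.mul_sum, Finset.sum_filter]
    simp [mul_comm]
  rw [step1]
  set static : (Finset (Fin n) × Finset (Finset (Fin n))) → Prop :=
    fun P => 4 ≤ P.1.card ∧ P.1.card ≤ M ∧ P.2.card = 2 * P.1.card - 4 ∧
      ∀ t ∈ P.2, t.card = 3 ∧ t ⊆ P.1 with hstatic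
  have step2 : ∀ P, ∑ ω : Tri n → Bool, (if cond P ω then wt n p ω else 0)
      = if static P then p ^ (2 * P.1.card - 4) else 0 := by
    intro P
    by_cases hs : static P
    · rw [if_pos hs]
      obtain ⟨h1, h2, h3, h4⟩ := hs
      set G : Finset (Tri n) := Finset.univ.filter (fun t : Tri n => t.1 ∈ P.2) with hG
      have hcard : G.card = P.2.card := by
        rw [hG]
        refine Finset.card_bij (fun t _ => t.1) (fun t ht => (Finset.mem_filter.1 ht).2)
          (fun a ha b hb hab => Subtype.ext hab) (fun b hb => ?_)
        exact ⟨⟨b, (h4 b hb).1⟩, Finset.mem_filter.2 ⟨Finset.mem_univ _, hb⟩, rfl⟩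
      have hiff : ∀ ω, cond P ω ↔ ∀ t ∈ G, ω t = true := by
        intro ω
        constructor
        · rintro ⟨-, -, -, h⟩ t ht
          obtain ⟨⟨h', hω⟩, -⟩ := h t.1 (Finset.mem_filter.1 ht).2
          convert hω
        · intro h
          refine ⟨h1, h2, h3, fun t ht => ⟨⟨(h4 t ht).1, ?_⟩, (h4 t ht).2⟩⟩
          exact h ⟨t, (h4 t ht).1⟩ (Finset.mem_filter.2 ⟨Finset.mem_univ _, ht⟩)
      calc ∑ ω : Tri n → Bool, (if cond P ω then wt n p ω else 0)
          = ∑ ω : Tri n → Bool, (if ∀ t ∈ G, ω t = true then wt n p ω else 0) := by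
            refine Finset.sum_congr rfl fun ω _ => ?_
            simp only [hiff ω]
        _ = p ^ G.card := marginal n p hp G
        _ = p ^ (2 * P.1.card - 4) := by rw [hcard, h3]
    · rw [if_neg hs]
      refine Finset.sum_eq_zero fun ω _ => ?_
      rw [if_neg]
      intro ⟨h1, h2, h3, h4⟩
      exact hs ⟨h1, h2, h3, fun t ht => ⟨(h4 t ht).1.choose, (h4 t ht).2⟩⟩
  simp only [step2]
  rw [← Finset.sum_filter]
  set F := Finset.univ.filter static with hF
  have hmaps : ∀ P ∈ F, P.1.card ∈ Finset.Icc 4 M := by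
    intro P hP
    obtain ⟨h1, h2, -, -⟩ := (Finset.mem_filter.1 hP).2
    exact Finset.mem_Icc.2 ⟨h1, h2⟩
  rw [← Finset.sum_fiberwise_of_maps_to hmaps]
  refine Finset.sum_le_sum fun s hs => ?_
  have hsub : F.filter (fun P => P.1.card = s) ⊆
      (Finset.univ.powersetCard s).biUnion
        (fun S => {S} ×ˢ S.powerset.powerset) := by
    intro P hP
    obtain ⟨hPF, hPs⟩ := Finset.mem_filter.1 hP
    obtain ⟨-, -, -, h4⟩ := (Finset.mem_filter.1 hPF).2
    refine Finset.mem_biUnion.2 ⟨P.1, ?_, ?_⟩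
    · exact Finset.mem_powersetCard.2 ⟨Finset.subset_univ _, hPs⟩
    · refine Finset.mem_product.2 ⟨Finset.mem_singleton_self _, ?_⟩
      refine Finset.mem_powerset.2 fun t ht => Finset.mem_powerset.2 ((h4 t ht).2)
  have hcardle : (F.filter (fun P => P.1.card = s)).card ≤ n.choose s * 2 ^ (2 ^ s) := by
    refine le_trans (Finset.card_le_card hsub) ?_
    refine le_trans (Finset.card_biUnion_le) ?_
    have : ∀ S ∈ (Finset.univ : Finset (Fin n)).powersetCard s,
        ({S} ×ˢ S.powerset.powerset).card = 2 ^ (2 ^ s) := by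
      intro S hS
      have hScard : S.card = s := (Finset.mem_powersetCard.1 hS).2
      rw [Finset.card_product, Finset.card_singleton, one_mul, Finset.card_powerset,
        Finset.card_powerset, hScard]
    rw [Finset.sum_congr rfl this, Finset.sum_const, smul_eq_mul, Finset.card_powersetCard,
      Finset.card_univ, Fintype.card_fin]
  calc ∑ P ∈ F.filter (fun P => P.1.card = s), p ^ (2 * P.1.card - 4)
      = ∑ P ∈ F.filter (fun P => P.1.card = s), p ^ (2 * s - 4) := by
        refine Finset.sum_congr rfl fun P hP => ?_
        rw [(Finset.mem_filter.1 hP).2]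
    _ = (F.filter (fun P => P.1.card = s)).card • p ^ (2 * s - 4) := by
        rw [Finset.sum_const]
    _ ≤ (n.choose s * 2 ^ (2 ^ s) : ℕ) • p ^ (2 * s - 4) := by
        exact nsmul_le_nsmul_left zero_le hcardle
    _ = (n.choose s * 2 ^ (2 ^ s) : ℝ≥0∞) * p ^ (2 * s - 4) := by
        rw [nsmul_eq_mul]; push_cast; ring

lemma term_bound (α : ℝ) (hα : α < 1 / 2) (n s M : ℕ) (hn : 1 ≤ n) (hs4 : 4 ≤ s)
    (hsM : s ≤ M) :
    (n.choose s * 2 ^ (2 ^ s) : ℝ≥0∞) * ((n : ℝ≥0∞) ^ (α - 1)) ^ (2 * s - 4)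
      ≤ (2 ^ (2 ^ M) : ℝ≥0∞) * (n : ℝ≥0∞) ^ (4 * α) := by
  have hn0 : (n : ℝ≥0∞) ≠ 0 := Nat.cast_ne_zero.mpr (by omega)
  have hnt : (n : ℝ≥0∞) ≠ ⊤ := ENNReal.natCast_ne_top n
  have hn1 : (1 : ℝ≥0∞) ≤ (n : ℝ≥0∞) := by exact_mod_cast hn
  have h1 : (n.choose s : ℝ≥0∞) ≤ (n : ℝ≥0∞) ^ s := by
    exact_mod_cast Nat.choose_le_pow n s
  have h2 : ((2 : ℝ≥0∞) ^ (2 ^ s)) ≤ 2 ^ (2 ^ M) :=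
    pow_le_pow_right₀ one_le_two (Nat.pow_le_pow_right (by norm_num) hsM)
  have key : (n : ℝ≥0∞) ^ s * ((n : ℝ≥0∞) ^ (α - 1)) ^ (2 * s - 4)
      ≤ (n : ℝ≥0∞) ^ (4 * α) := by
    rw [← ENNReal.rpow_natCast (n : ℝ≥0∞) s, ← ENNReal.rpow_natCast _ (2 * s - 4),
      ← ENNReal.rpow_mul, ← ENNReal.rpow_add _ _ hn0 hnt]
    refine ENNReal.rpow_le_rpow_of_exponent_le hn1 ?_
    have h42 : (4 : ℕ) ≤ 2 * s := by omega
    have hcast : ((2 * s - 4 : ℕ) : ℝ) = 2 * (s : ℝ) - 4 := by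
      rw [Nat.cast_sub h42]; push_cast; ring
    rw [hcast]
    have hs4' : (4 : ℝ) ≤ (s : ℝ) := by exact_mod_cast hs4
    nlinarith [mul_nonneg (by linarith : (0:ℝ) ≤ (s:ℝ) - 4) (by linarith : (0:ℝ) ≤ 1 - 2 * α)]
  calc (n.choose s * 2 ^ (2 ^ s) : ℝ≥0∞) * ((n : ℝ≥0∞) ^ (α - 1)) ^ (2 * s - 4)
      ≤ ((n : ℝ≥0∞) ^ s * 2 ^ (2 ^ M)) * ((n : ℝ≥0∞) ^ (α - 1)) ^ (2 * s - 4) :=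
        mul_le_mul' (mul_le_mul' h1 h2) le_rfl
    _ = (2 ^ (2 ^ M) : ℝ≥0∞) * ((n : ℝ≥0∞) ^ s * ((n : ℝ≥0∞) ^ (α - 1)) ^ (2 * s - 4)) := by
        ring
    _ ≤ (2 ^ (2 ^ M) : ℝ≥0∞) * (n : ℝ≥0∞) ^ (4 * α) := mul_le_mul' le_rfl key

/-- **Lemma (few barely-dense subcomplexes).**
Let `0 < α < 1/2`, `M ≥ 4` a fixed integer, and `p = n^(α-1)`. Then with high
probability `T_Y(M) < n^(2+α/2)` for `Y ∼ Y(n,p)`. -/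
theorem barely_dense_whp (α : ℝ) (hα0 : 0 < α) (hα : α < 1 / 2)
    (M : ℕ) (hM : 4 ≤ M) :
    Filter.Tendsto (fun n : ℕ =>
      lmProb n ((n : ℝ≥0∞) ^ (α - 1))
        {ω | (TY n M ω : ℝ) < (n : ℝ) ^ (2 + α / 2)})
      Filter.atTop (nhds 1) := by
  set K : ℝ≥0∞ := (((M + 1) * 2 ^ (2 ^ M) : ℕ) : ℝ≥0∞) with hK
  have hKt : K ≠ ⊤ := ENNReal.natCast_ne_top _
  set c : ℝ := 4 * α - (2 + α / 2) with hc
  set E : ∀ n : ℕ, Set (Tri n → Bool) :=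
    fun n => {ω | (TY n M ω : ℝ) < (n : ℝ) ^ (2 + α / 2)} with hE
  -- the complement probability is small
  have hbound : ∀ n : ℕ, 1 ≤ n →
      lmProb n ((n : ℝ≥0∞) ^ (α - 1)) (E n)ᶜ ≤ K * (n : ℝ≥0∞) ^ c := by
    intro n hn
    have hn0 : (n : ℝ≥0∞) ≠ 0 := Nat.cast_ne_zero.mpr (by omega)
    have hnt : (n : ℝ≥0∞) ≠ ⊤ := ENNReal.natCast_ne_top n
    have hn1 : (1 : ℝ≥0∞) ≤ (n : ℝ≥0∞) := by exact_mod_cast hn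
    have hp : ((n : ℝ≥0∞) ^ (α - 1)) ≤ 1 := by
      calc (n : ℝ≥0∞) ^ (α - 1) ≤ (n : ℝ≥0∞) ^ (0 : ℝ) :=
            ENNReal.rpow_le_rpow_of_exponent_le hn1 (by linarith)
        _ = 1 := ENNReal.rpow_zero
    set B : ℝ≥0∞ := (n : ℝ≥0∞) ^ (2 + α / 2) with hB
    have hB1 : (1 : ℝ≥0∞) ≤ B := by
      calc (1 : ℝ≥0∞) = (n : ℝ≥0∞) ^ (0 : ℝ) := (ENNReal.rpow_zero).symm
        _ ≤ B := ENNReal.rpow_le_rpow_of_exponent_le hn1 (by linarith)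
    have hB0 : B ≠ 0 := by
      intro h; rw [h] at hB1; simp at hB1
    have hBt : B ≠ ⊤ := ENNReal.rpow_ne_top_of_nonneg (by linarith) hnt
    have hnR : (0 : ℝ) < (n : ℝ) := by exact_mod_cast Nat.lt_of_lt_of_le Nat.zero_lt_one hn
    have hEc : ∀ ω ∈ (E n)ᶜ, B ≤ (TY n M ω : ℝ≥0∞) := by
      intro ω hω
      have hle : (n : ℝ) ^ (2 + α / 2) ≤ (TY n M ω : ℝ) := not_lt.mp hω
      calc B = ENNReal.ofReal ((n : ℝ) ^ (2 + α / 2)) := by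
            rw [hB, ← ENNReal.ofReal_rpow_of_pos hnR, ENNReal.ofReal_natCast]
        _ ≤ ENNReal.ofReal (TY n M ω : ℝ) := ENNReal.ofReal_le_ofReal hle
        _ = (TY n M ω : ℝ≥0∞) := ENNReal.ofReal_natCast _
    have hsum : ∑ s ∈ Finset.Icc 4 M,
        (n.choose s * 2 ^ (2 ^ s) : ℝ≥0∞) * ((n : ℝ≥0∞) ^ (α - 1)) ^ (2 * s - 4)
        ≤ K * (n : ℝ≥0∞) ^ (4 * α) := by
      calc ∑ s ∈ Finset.Icc 4 M,
            (n.choose s * 2 ^ (2 ^ s) : ℝ≥0∞) * ((n : ℝ≥0∞) ^ (α - 1)) ^ (2 * s - 4)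
          ≤ ∑ _s ∈ Finset.Icc 4 M, (2 ^ (2 ^ M) : ℝ≥0∞) * (n : ℝ≥0∞) ^ (4 * α) :=
            Finset.sum_le_sum fun s hs => term_bound α hα n s M hn
              (Finset.mem_Icc.1 hs).1 (Finset.mem_Icc.1 hs).2
        _ = (Finset.Icc 4 M).card • ((2 ^ (2 ^ M) : ℝ≥0∞) * (n : ℝ≥0∞) ^ (4 * α)) :=
            Finset.sum_const _
        _ ≤ (M + 1) • ((2 ^ (2 ^ M) : ℝ≥0∞) * (n : ℝ≥0∞) ^ (4 * α)) :=
            nsmul_le_nsmul_left zero_le (by rw [Nat.card_Icc]; omega)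
        _ = K * (n : ℝ≥0∞) ^ (4 * α) := by
            rw [hK, nsmul_eq_mul]; push_cast; ring
    have h1 : lmProb n ((n : ℝ≥0∞) ^ (α - 1)) (E n)ᶜ * B ≤ K * (n : ℝ≥0∞) ^ (4 * α) :=
      le_trans (markov n M _ _ B hEc) (le_trans (exp_bound n M _ hp) hsum)
    have h2 : lmProb n ((n : ℝ≥0∞) ^ (α - 1)) (E n)ᶜ ≤ (K * (n : ℝ≥0∞) ^ (4 * α)) / B :=
      (ENNReal.le_div_iff_mul_le (Or.inl hB0) (Or.inl hBt)).2 h1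
    refine le_trans h2 (le_of_eq ?_)
    rw [div_eq_mul_inv, hB, ← ENNReal.rpow_neg, mul_assoc, ← ENNReal.rpow_add _ _ hn0 hnt,
      hc]
    ring_nf
  -- the bound tends to zero
  have h0 : Filter.Tendsto (fun n : ℕ => K * (n : ℝ≥0∞) ^ c) Filter.atTop (nhds 0) := by
    have hpos : 0 < -c := by rw [hc]; linarith
    have hreal : Filter.Tendsto (fun x : ℝ => x ^ (-(-c))) Filter.atTop (nhds 0) :=
      tendsto_rpow_neg_atTop hpos
    have hnat : Filter.Tendsto (fun n : ℕ => ((n : ℝ)) ^ (-(-c))) Filter.atTop (nhds 0) :=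
      hreal.comp tendsto_natCast_atTop_atTop
    have hofreal := ENNReal.tendsto_ofReal hnat
    rw [ENNReal.ofReal_zero] at hofreal
    have heq : ∀ᶠ n : ℕ in Filter.atTop,
        ENNReal.ofReal ((n : ℝ) ^ (-(-c))) = (n : ℝ≥0∞) ^ c := by
      filter_upwards [Filter.eventually_ge_atTop 1] with n hn
      have hnR : (0 : ℝ) < (n : ℝ) := by exact_mod_cast Nat.lt_of_lt_of_le Nat.zero_lt_one hn
      rw [← ENNReal.ofReal_rpow_of_pos hnR, ENNReal.ofReal_natCast, neg_neg]
    have h := ENNReal.Tendsto.const_mul (hofreal.congr' heq) (Or.inr hKt)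
    simpa using h
  -- complement probability tends to zero
  have h2 : Filter.Tendsto (fun n : ℕ => lmProb n ((n : ℝ≥0∞) ^ (α - 1)) (E n)ᶜ)
      Filter.atTop (nhds 0) := by
    refine tendsto_of_tendsto_of_tendsto_of_le_of_le' tendsto_const_nhds h0
      (Filter.Eventually.of_forall fun n => zero_le) ?_
    filter_upwards [Filter.eventually_ge_atTop 1] with n hn using hbound n hn
  -- assemble
  have hcompl : ∀ᶠ n : ℕ in Filter.atTop,
      (1 : ℝ≥0∞) - lmProb n ((n : ℝ≥0∞) ^ (α - 1)) (E n)ᶜ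
        = lmProb n ((n : ℝ≥0∞) ^ (α - 1)) (E n) := by
    filter_upwards [Filter.eventually_ge_atTop 1] with n hn
    have hn1 : (1 : ℝ≥0∞) ≤ (n : ℝ≥0∞) := by exact_mod_cast hn
    have hp : ((n : ℝ≥0∞) ^ (α - 1)) ≤ 1 := by
      calc (n : ℝ≥0∞) ^ (α - 1) ≤ (n : ℝ≥0∞) ^ (0 : ℝ) :=
            ENNReal.rpow_le_rpow_of_exponent_le hn1 (by linarith)
        _ = 1 := ENNReal.rpow_zero
    have hadd := lmProb_add_compl n ((n : ℝ≥0∞) ^ (α - 1)) hp (E n)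
    have hne : lmProb n ((n : ℝ≥0∞) ^ (α - 1)) (E n)ᶜ ≠ ⊤ := by
      intro h
      rw [h, add_top] at hadd
      exact ENNReal.one_ne_top hadd.symm
    exact ENNReal.sub_eq_of_eq_add hne hadd.symm
  have hfin : Filter.Tendsto (fun n : ℕ =>
      (1 : ℝ≥0∞) - lmProb n ((n : ℝ≥0∞) ^ (α - 1)) (E n)ᶜ) Filter.atTop (nhds 1) := by
    have := ENNReal.Tendsto.sub (tendsto_const_nhds (x := (1 : ℝ≥0∞))) h2
      (Or.inl ENNReal.one_ne_top)
    simpa using this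
  exact hfin.congr' hcompl
end
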